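/- arXiv:2504.00940 — 4 statements merged into one kernel-verified Lean document; each statement's English description precedes it below -/
import Mathlib

section
/- Let k be a positive even integer and let s be a vertex of degree at least 2 in an (s,k)-edge-connected finite graph G in which every vertex has even degree. Then the complement of the k-lifting graph L(G,s,k) is disconnected. -/
/-- A multigraph: parallel edges allowed, no loops. Each edge `e` has a pair of
distinct end-vertices `ends e`. -/
structure Multigraph (V : Type u) (E : Type v) where
  ends : E → Sym2 V
  no_loops : ∀ e : E, ¬ (ends e).IsDiag

namespace Multigraph

variable {V : Type u} {E : Type v}

/-- A walk in a multigraph, recorded as the sequence of traversed edges. -/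
inductive Walk (G : Multigraph V E) : V → V → Type (max u v)
  | nil (v : V) : Walk G v v
  | cons {u v w : V} (e : E) (h : G.ends e = s(u, v)) (p : Walk G v w) : Walk G u w

namespace Walk

variable {G : Multigraph V E}

/-- The list of edges traversed by a walk. -/
def edges : ∀ {a b : V}, G.Walk a b → List E
  | _, _, .nil _ => []
  | _, _, .cons e _ p => e :: p.edges

/-- The list of vertices visited by a walk. -/
def support : ∀ {a b : V}, G.Walk a b → List V
  | a, _, .nil _ => [a]
  | a, _, .cons _ _ p => a :: p.support

/-- A walk is a path if it has no repeated vertices. -/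
def IsPath {a b : V} (p : G.Walk a b) : Prop := p.support.Nodup

end Walk

/-- `G` is `k`-edge-connected: between any two distinct vertices there are `k`
pairwise edge-disjoint paths. -/
def EdgeConnected (G : Multigraph V E) (k : ℕ) : Prop :=
  ∀ u v : V, u ≠ v → ∃ P : Fin k → G.Walk u v,
    (∀ i, (P i).IsPath) ∧ ∀ i j, i ≠ j → ∀ e, e ∈ (P i).edges → e ∉ (P j).edges

/-- `G` is weakly `k`-linked: for every `k` pairs of vertices `(s i, t i)` with
`s i ≠ t i` there are pairwise edge-disjoint paths `P i` joining `s i` and `t i`. -/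
def WeaklyLinked (G : Multigraph V E) (k : ℕ) : Prop :=
  ∀ s t : Fin k → V, (∀ i, s i ≠ t i) →
    ∃ P : (i : Fin k) → G.Walk (s i) (t i),
      (∀ i, (P i).IsPath) ∧ ∀ i j, i ≠ j → ∀ e, e ∈ (P i).edges → e ∉ (P j).edges

end Multigraph

namespace Multigraph

variable {V : Type u} {E : Type v}

/-- `G` is `(s,k)`-edge-connected: between any two distinct vertices different
from `s` there are `k` pairwise edge-disjoint paths (possibly through `s`). -/
def SEdgeConnected (G : Multigraph V E) (s : V) (k : ℕ) : Prop :=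
  ∀ u v : V, u ≠ s → v ≠ s → u ≠ v → ∃ P : Fin k → G.Walk u v,
    (∀ i, (P i).IsPath) ∧ ∀ i j, i ≠ j → ∀ e, e ∈ (P i).edges → e ∉ (P j).edges

/-- The lift `G_{sx,sy}`: delete the edges `e₁ = sx` and `e₂ = sy` and add a new
edge joining `x` and `y`; if `x = y` no new edge is added (the loop is deleted). -/
def lift (G : Multigraph V E) (e₁ e₂ : E) (x y : V) :
    Multigraph V ({e : E // e ≠ e₁ ∧ e ≠ e₂} ⊕ PLift (x ≠ y)) where
  ends := Sum.elim (fun e => G.ends e.1) (fun _ => s(x, y))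
  no_loops := by
    rintro (e | h)
    · exact G.no_loops e.1
    · intro hd
      exact h.down (Sym2.mk_isDiag_iff.mp hd)

/-- The pair of edges `e₁, e₂` incident with `s` is `k`-liftable: the lift
`G_{e₁,e₂}` is `(s,k)`-edge-connected. -/
def Liftable (G : Multigraph V E) (s : V) (k : ℕ) (e₁ e₂ : E) : Prop :=
  e₁ ≠ e₂ ∧ ∃ x y : V, G.ends e₁ = s(s, x) ∧ G.ends e₂ = s(s, y) ∧
    (G.lift e₁ e₂ x y).SEdgeConnected s k

/-- The `k`-lifting graph `L(G,s,k)`: its vertices are the edges of `G` incident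
with `s`, two of them being adjacent iff they form a `k`-liftable pair. -/
def liftingGraph (G : Multigraph V E) (s : V) (k : ℕ) :
    SimpleGraph {e : E // s ∈ G.ends e} where
  Adj f₁ f₂ := G.Liftable s k f₁.1 f₂.1 ∨ G.Liftable s k f₂.1 f₁.1
  symm := ⟨fun _ _ h => h.symm⟩
  loopless := ⟨fun f h => by rcases h with h | h <;> exact h.1 rfl⟩

/-- The degree of a vertex: the number of edges incident with it. -/
noncomputable def degree (G : Multigraph V E) (v : V) : ℕ :=
  {e : E | v ∈ G.ends e}.ncard

end Multigraph

namespace Multigraph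

variable {V : Type u} {E : Type v} {G : Multigraph V E}

lemma exists_rep (G : Multigraph V E) (e : E) : ∃ a b : V, G.ends e = s(a, b) ∧ a ≠ b := by
  obtain ⟨⟨a, b⟩, h⟩ := Quot.exists_rep (G.ends e)
  refine ⟨a, b, h.symm, fun hab => ?_⟩
  subst hab
  exact G.no_loops e (by rw [← h]; exact Sym2.mk_isDiag_iff.mpr rfl)

lemma mem_other (G : Multigraph V E) {e : E} {v : V} (h : v ∈ G.ends e) :
    ∃ o : V, G.ends e = s(v, o) ∧ o ≠ v := by
  refine ⟨Sym2.Mem.other h, (Sym2.other_spec h).symm, ?_⟩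
  intro he
  exact G.no_loops e (by rw [← Sym2.other_spec h, he]; exact Sym2.mk_isDiag_iff.mpr rfl)

/-- Edge `e` crosses the set `A`. -/
def Crosses (G : Multigraph V E) (e : E) (A : Set V) : Prop :=
  ∃ a b : V, G.ends e = s(a, b) ∧ a ∈ A ∧ b ∉ A

lemma crosses_iff {e : E} {A : Set V} {a b : V} (h : G.ends e = s(a, b)) :
    G.Crosses e A ↔ ((a ∈ A ∧ b ∉ A) ∨ (b ∈ A ∧ a ∉ A)) := by
  constructor
  · rintro ⟨x, y, hxy, hx, hy⟩
    rw [h, Sym2.eq_iff] at hxy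
    rcases hxy with ⟨rfl, rfl⟩ | ⟨rfl, rfl⟩
    · exact Or.inl ⟨hx, hy⟩
    · exact Or.inr ⟨hx, hy⟩
  · rintro (⟨h1, h2⟩ | ⟨h1, h2⟩)
    · exact ⟨a, b, h, h1, h2⟩
    · exact ⟨b, a, by rw [h, Sym2.eq_swap], h1, h2⟩

/-- The number of edges crossing `A`. -/
noncomputable def cut (G : Multigraph V E) (A : Set V) : ℕ :=
  {e : E | G.Crosses e A}.ncard

lemma crosses_compl {e : E} {A : Set V} : G.Crosses e Aᶜ ↔ G.Crosses e A := by
  obtain ⟨a, b, h, -⟩ := exists_rep G e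
  rw [crosses_iff h, crosses_iff h]
  simp only [Set.mem_compl_iff, not_not]
  tauto

lemma cut_compl (G : Multigraph V E) (A : Set V) : G.cut Aᶜ = G.cut A := by
  unfold cut; congr 1; ext e; exact crosses_compl

end Multigraph

namespace Multigraph

namespace Walk

variable {V : Type u} {E : Type v} {G : Multigraph V E}

/-- Change the endpoints of a walk along equalities. -/
def copy {a b a' b' : V} (p : G.Walk a b) (ha : a = a') (hb : b = b') : G.Walk a' b' :=
  ha ▸ hb ▸ p

@[simp] lemma support_copy {a b a' b' : V} (p : G.Walk a b) (ha : a = a') (hb : b = b') :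
    (p.copy ha hb).support = p.support := by subst ha; subst hb; rfl

@[simp] lemma edges_copy {a b a' b' : V} (p : G.Walk a b) (ha : a = a') (hb : b = b') :
    (p.copy ha hb).edges = p.edges := by subst ha; subst hb; rfl

lemma crossing {A : Set V} : ∀ {a b : V} (p : G.Walk a b), a ∈ A → b ∉ A →
    ∃ e ∈ p.edges, G.Crosses e A
  | _, _, .nil _, ha, hb => absurd ha hb
  | a, b, .cons (v := v) e he p, ha, hb => by
    by_cases hv : v ∈ A
    · obtain ⟨e', he', hc⟩ := crossing p hv hb
      exact ⟨e', by simp [edges, he'], hc⟩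
    · exact ⟨e, by simp [edges], a, v, he, ha, hv⟩

variable [DecidableEq V]

/-- The tail of a walk starting from a vertex `w` on it. -/
def dropUntil {w : V} : ∀ {a b : V} (p : G.Walk a b), w ∈ p.support → G.Walk w b
  | a, _, .nil _, h => (Walk.nil a).copy (show a = w by symm; simpa [support] using h) rfl
  | a, _, .cons e he p, h =>
    if hw : w = a then (Walk.cons e he p).copy hw.symm rfl
    else p.dropUntil (by
      rcases (List.mem_cons.mp (by simpa [support] using h)) with h' | h'
      exacts [absurd h' hw, h'])

lemma edges_dropUntil_subset {w : V} : ∀ {a b : V} (p : G.Walk a b) (h : w ∈ p.support),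
    ∀ e ∈ (p.dropUntil h).edges, e ∈ p.edges
  | a, _, .nil _, h => by simp [dropUntil]
  | a, _, .cons e he p, h => by
    rw [dropUntil]
    split
    · simp
    · intro e' he'
      have := edges_dropUntil_subset p _ e' he'
      simp [edges, this]

lemma support_dropUntil_sublist {w : V} : ∀ {a b : V} (p : G.Walk a b) (h : w ∈ p.support),
    (p.dropUntil h).support.Sublist p.support
  | a, _, .nil _, h => by simp [dropUntil]
  | a, _, .cons e he p, h => by
    rw [dropUntil]
    split
    · simp
    · exact (support_dropUntil_sublist p _).trans (by simp [support])

/-- Shortcutting a walk to a path. -/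
def bypass : ∀ {a b : V}, G.Walk a b → G.Walk a b
  | _, _, .nil a => .nil a
  | a, _, .cons e he p =>
    let p' := p.bypass
    if hw : a ∈ p'.support then p'.dropUntil hw else .cons e he p'

lemma edges_bypass_subset : ∀ {a b : V} (p : G.Walk a b), ∀ e ∈ p.bypass.edges, e ∈ p.edges
  | _, _, .nil a => by simp [bypass]
  | a, _, .cons e he p => by
    rw [bypass]
    split
    · intro e' he'
      have := edges_dropUntil_subset _ _ e' he'
      have := edges_bypass_subset p e' this
      simp [edges, this]
    · intro e' he'
      rcases List.mem_cons.mp (by simpa [edges] using he') with h' | h'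
      · simp [edges, h']
      · simp [edges, edges_bypass_subset p e' h']

lemma bypass_isPath : ∀ {a b : V} (p : G.Walk a b), p.bypass.IsPath
  | _, _, .nil a => by simp [bypass, IsPath, support]
  | a, _, .cons e he p => by
    rw [bypass]
    split
    · exact List.Sublist.nodup (support_dropUntil_sublist _ _) (bypass_isPath p)
    · rename_i hw
      have := bypass_isPath p
      simpa [IsPath, support] using ⟨hw, this⟩

end Walk

end Multigraph

namespace Multigraph

variable {V : Type u} {E : Type v} {G : Multigraph V E}

lemma ncard_setOf_eq_sum {α : Type w} [Fintype α] (P : α → Prop) [DecidablePred P] :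
    {x | P x}.ncard = ∑ x : α, if P x then 1 else 0 := by
  rw [show {x | P x} = ↑(Finset.univ.filter P) by ext; simp]
  rw [Set.ncard_coe_finset, Finset.card_filter]

/-- The set of edges with one end in `S` and the other in `T`. -/
def btwSet (G : Multigraph V E) (S T : Set V) : Set E :=
  {e | ∃ a b, G.ends e = s(a, b) ∧ a ∈ S ∧ b ∈ T}

lemma btw_iff {e : E} {S T : Set V} {a b : V} (h : G.ends e = s(a, b)) :
    e ∈ G.btwSet S T ↔ ((a ∈ S ∧ b ∈ T) ∨ (b ∈ S ∧ a ∈ T)) := by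
  constructor
  · rintro ⟨x, y, hxy, hx, hy⟩
    rw [h, Sym2.eq_iff] at hxy
    rcases hxy with ⟨rfl, rfl⟩ | ⟨rfl, rfl⟩
    · exact Or.inl ⟨hx, hy⟩
    · exact Or.inr ⟨hx, hy⟩
  · rintro (⟨h1, h2⟩ | ⟨h1, h2⟩)
    · exact ⟨a, b, h, h1, h2⟩
    · exact ⟨b, a, by rw [h, Sym2.eq_swap], h1, h2⟩

lemma cut_submod [Fintype E] (G : Multigraph V E) (X Y : Set V) :
    G.cut (X ∪ Y) + G.cut (X ∩ Y) ≤ G.cut X + G.cut Y := by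
  classical
  unfold cut
  simp only [ncard_setOf_eq_sum]
  rw [← Finset.sum_add_distrib, ← Finset.sum_add_distrib]
  apply Finset.sum_le_sum
  intro e _
  obtain ⟨a, b, h, -⟩ := exists_rep G e
  simp only [crosses_iff h, Set.mem_union, Set.mem_inter_iff]
  by_cases haX : a ∈ X <;> by_cases haY : a ∈ Y <;> by_cases hbX : b ∈ X <;>
    by_cases hbY : b ∈ Y <;> simp [haX, haY, hbX, hbY]

lemma cut_posimod [Fintype E] (G : Multigraph V E) (X Y : Set V) :
    G.cut (X \ Y) + G.cut (Y \ X) + 2 * (G.btwSet (X ∩ Y) (X ∪ Y)ᶜ).ncard ≤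
      G.cut X + G.cut Y := by
  classical
  unfold cut
  rw [show G.btwSet (X ∩ Y) (X ∪ Y)ᶜ = {e | e ∈ G.btwSet (X ∩ Y) (X ∪ Y)ᶜ} from rfl]
  simp only [ncard_setOf_eq_sum, Finset.mul_sum]
  rw [← Finset.sum_add_distrib, ← Finset.sum_add_distrib, ← Finset.sum_add_distrib]
  apply Finset.sum_le_sum
  intro e _
  obtain ⟨a, b, h, -⟩ := exists_rep G e
  simp only [crosses_iff h, btw_iff h]
  simp only [Set.mem_diff, Set.mem_inter_iff, Set.mem_union, Set.mem_compl_iff]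
  by_cases haX : a ∈ X <;> by_cases haY : a ∈ Y <;> by_cases hbX : b ∈ X <;>
    by_cases hbY : b ∈ Y <;> simp [haX, haY, hbX, hbY]

lemma cut_empty : G.cut (∅ : Set V) = 0 := by
  have h : {e : E | G.Crosses e (∅ : Set V)} = ∅ := by
    ext e
    simp [Crosses]
  rw [cut, h, Set.ncard_empty]

lemma even_cut [Finite V] [Finite E] (heven : ∀ v, Even (G.degree v)) (A : Set V) :
    Even (G.cut A) := by
  refine Set.Finite.induction_on (motive := fun A _ => Even (G.cut A)) A (Set.toFinite A)
    (by show Even (G.cut ∅); rw [cut_empty]; exact Even.zero) ?_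
  intro v A hv hAfin ih
  set X : Set E := {e | G.Crosses e A ∧ v ∉ G.ends e} with hX
  set Din : Set E := {e | ∃ o, G.ends e = s(v, o) ∧ o ∈ A} with hDin
  set Dout : Set E := {e | ∃ o, G.ends e = s(v, o) ∧ o ∉ A ∧ o ≠ v} with hDout
  have hdisj1 : Disjoint X Din := by
    rw [Set.disjoint_left]
    rintro e ⟨-, hv'⟩ ⟨o, ho, -⟩
    exact hv' (by rw [ho]; simp)
  have hdisj2 : Disjoint X Dout := by
    rw [Set.disjoint_left]
    rintro e ⟨-, hv'⟩ ⟨o, ho, -⟩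
    exact hv' (by rw [ho]; simp)
  have hdisj3 : Disjoint Din Dout := by
    rw [Set.disjoint_left]
    rintro e ⟨o, ho, hoA⟩ ⟨o', ho', ho'A, ho'v⟩
    rw [ho, Sym2.eq_iff] at ho'
    rcases ho' with ⟨-, rfl⟩ | ⟨rfl, rfl⟩
    · exact ho'A hoA
    · exact ho'v rfl
  have e1 : {e | G.Crosses e (insert v A)} = X ∪ Dout := by
    ext e
    obtain ⟨a, b, h, hab⟩ := exists_rep G e
    simp only [Set.mem_setOf_eq, Set.mem_union, hX, hDin, hDout, crosses_iff h]
    constructor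
    · rintro (⟨h1, h2⟩ | ⟨h1, h2⟩)
      · rcases Set.mem_insert_iff.mp h1 with rfl | h1'
        · right; exact ⟨b, h, fun hb => h2 (Set.mem_insert_of_mem _ hb),
            fun hb => h2 (hb ▸ Set.mem_insert _ _)⟩
        · left
          refine ⟨Or.inl ⟨h1', fun hb => h2 (Set.mem_insert_of_mem _ hb)⟩, ?_⟩
          rw [h, Sym2.mem_iff]
          rintro (rfl | rfl)
          · exact hv h1'
          · exact h2 (Set.mem_insert _ _)
      · rcases Set.mem_insert_iff.mp h1 with rfl | h1'
        · right; exact ⟨a, by rw [h, Sym2.eq_swap], fun ha => h2 (Set.mem_insert_of_mem _ ha),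
            fun ha => h2 (ha ▸ Set.mem_insert _ _)⟩
        · left
          refine ⟨Or.inr ⟨h1', fun ha => h2 (Set.mem_insert_of_mem _ ha)⟩, ?_⟩
          rw [h, Sym2.mem_iff]
          rintro (rfl | rfl)
          · exact h2 (Set.mem_insert _ _)
          · exact hv h1'
    · rintro (⟨h1, h2⟩ | ⟨o, ho, hoA, hov⟩)
      · rw [h, Sym2.mem_iff] at h2
        push_neg at h2
        rcases h1 with ⟨h1a, h1b⟩ | ⟨h1a, h1b⟩
        · exact Or.inl ⟨Set.mem_insert_of_mem _ h1a,
            by simp only [Set.mem_insert_iff]; push_neg; exact ⟨Ne.symm h2.2, h1b⟩⟩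
        · exact Or.inr ⟨Set.mem_insert_of_mem _ h1a,
            by simp only [Set.mem_insert_iff]; push_neg; exact ⟨Ne.symm h2.1, h1b⟩⟩
      · rw [ho, Sym2.eq_iff] at h
        rcases h with ⟨rfl, rfl⟩ | ⟨rfl, rfl⟩
        · exact Or.inl ⟨Set.mem_insert _ _,
            by simp only [Set.mem_insert_iff]; push_neg; exact ⟨hov, hoA⟩⟩
        · exact Or.inr ⟨Set.mem_insert _ _,
            by simp only [Set.mem_insert_iff]; push_neg; exact ⟨hov, hoA⟩⟩
  have e2 : {e | G.Crosses e A} = X ∪ Din := by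
    ext e
    obtain ⟨a, b, h, hab⟩ := exists_rep G e
    simp only [Set.mem_setOf_eq, Set.mem_union, hX, hDin, crosses_iff h]
    constructor
    · rintro (⟨h1, h2⟩ | ⟨h1, h2⟩)
      · by_cases hve : v ∈ G.ends e
        · right
          rw [h, Sym2.mem_iff] at hve
          rcases hve with rfl | rfl
          · exact absurd h1 hv
          · exact ⟨a, by rw [h, Sym2.eq_swap], h1⟩
        · exact Or.inl ⟨Or.inl ⟨h1, h2⟩, hve⟩
      · by_cases hve : v ∈ G.ends e
        · right
          rw [h, Sym2.mem_iff] at hve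
          rcases hve with rfl | rfl
          · exact ⟨b, h, h1⟩
          · exact absurd h1 hv
        · exact Or.inl ⟨Or.inr ⟨h1, h2⟩, hve⟩
    · rintro (⟨h1, -⟩ | ⟨o, ho, hoA⟩)
      · exact h1
      · rw [ho, Sym2.eq_iff] at h
        rcases h with ⟨rfl, rfl⟩ | ⟨rfl, rfl⟩
        · exact Or.inr ⟨hoA, hv⟩
        · exact Or.inl ⟨hoA, hv⟩
  have e3 : {e | v ∈ G.ends e} = Din ∪ Dout := by
    ext e
    simp only [Set.mem_setOf_eq, Set.mem_union, hDin, hDout]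
    constructor
    · intro hve
      obtain ⟨o, ho, hov⟩ := mem_other G hve
      by_cases hoA : o ∈ A
      · exact Or.inl ⟨o, ho, hoA⟩
      · exact Or.inr ⟨o, ho, hoA, hov⟩
    · rintro (⟨o, ho, -⟩ | ⟨o, ho, -⟩) <;> rw [ho] <;> simp
  have c1 : G.cut (insert v A) = X.ncard + Dout.ncard := by
    rw [cut, e1, Set.ncard_union_eq hdisj2 (Set.toFinite _) (Set.toFinite _)]
  have c2 : G.cut A = X.ncard + Din.ncard := by
    rw [cut, e2, Set.ncard_union_eq hdisj1 (Set.toFinite _) (Set.toFinite _)]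
  have c3 : G.degree v = Din.ncard + Dout.ncard := by
    rw [degree, e3, Set.ncard_union_eq hdisj3 (Set.toFinite _) (Set.toFinite _)]
  obtain ⟨m, hm⟩ := heven v
  obtain ⟨n, hn⟩ := ih
  rw [c3] at hm
  rw [c2] at hn
  rw [c1]
  exact ⟨n + m - Din.ncard, by omega⟩

end Multigraph

namespace Multigraph

variable {V : Type u} {E : Type v} {G : Multigraph V E}

lemma cut_ge_of_walks [Finite E] {u v : V} {A : Set V} (hu : u ∈ A) (hv : v ∉ A) {k : ℕ}
    (P : Fin k → G.Walk u v)
    (hdisj : ∀ i j, i ≠ j → ∀ e, e ∈ (P i).edges → e ∉ (P j).edges) :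
    k ≤ G.cut A := by
  choose f hf1 hf2 using fun i => (P i).crossing hu hv
  have hinj : Function.Injective f := by
    intro i j hij
    by_contra hne
    exact hdisj i j hne (f i) (hf1 i) (hij ▸ hf1 j)
  have hsub : Set.range f ⊆ {e | G.Crosses e A} := by
    rintro e ⟨i, rfl⟩; exact hf2 i
  have h1 : (Set.range f).ncard = k := by
    rw [← Set.image_univ, Set.ncard_image_of_injective _ hinj, Set.ncard_univ, Nat.card_eq_fintype_card,
      Fintype.card_fin]
  rw [cut, ← h1]
  exact Set.ncard_le_ncard hsub (Set.toFinite _)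

/-! ### Menger's theorem -/

section Menger

open scoped Classical

variable [Fintype V] [Fintype E]

/-- An arc: an edge together with an ordering of its endpoints. -/
def Arc (G : Multigraph V E) := {p : E × V × V // G.ends p.1 = s(p.2.1, p.2.2)}

namespace Arc

instance : Finite (Arc G) := Subtype.finite

noncomputable instance : Fintype (Arc G) := Fintype.ofFinite _

def edge (a : Arc G) : E := a.1.1
def src (a : Arc G) : V := a.1.2.1
def dst (a : Arc G) : V := a.1.2.2

lemma ends_eq (a : Arc G) : G.ends a.edge = s(a.src, a.dst) := a.2

lemma src_ne_dst (a : Arc G) : a.src ≠ a.dst := by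
  intro h
  exact G.no_loops a.edge (by rw [a.ends_eq, h]; exact Sym2.mk_isDiag_iff.mpr rfl)

end Arc

/-- Out-degree of a vertex in an arc set. -/
noncomputable def outC (U : Finset (Arc G)) (w : V) : ℕ := (U.filter fun a => a.src = w).card
noncomputable def inC (U : Finset (Arc G)) (w : V) : ℕ := (U.filter fun a => a.dst = w).card
/-- Excess (out-degree minus in-degree). -/
noncomputable def exc (U : Finset (Arc G)) (w : V) : ℤ := (outC U w : ℤ) - inC U w

/-- Each edge carries at most one arc of `U`. -/
def EdgeInj (U : Finset (Arc G)) : Prop := ∀ a ∈ U, ∀ b ∈ U, a.edge = b.edge → a = b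

/-- Residual step. -/
def Rstep (U : Finset (Arc G)) (x y : V) : Prop :=
  (∃ e : E, G.ends e = s(x, y) ∧ ∀ a ∈ U, a.edge ≠ e) ∨ (∃ a ∈ U, a.src = y ∧ a.dst = x)

lemma exc_insert {U : Finset (Arc G)} {a : Arc G} (ha : a ∉ U) (w : V) :
    exc (insert a U) w = exc U w + (if w = a.src then 1 else 0) - (if w = a.dst then 1 else 0) := by
  have hs : a ∉ U.filter (fun b => b.src = w) := fun h => ha (Finset.mem_filter.mp h).1
  have hd : a ∉ U.filter (fun b => b.dst = w) := fun h => ha (Finset.mem_filter.mp h).1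
  unfold exc outC inC
  rw [Finset.filter_insert, Finset.filter_insert]
  by_cases h1 : a.src = w <;> by_cases h2 : a.dst = w
  · rw [if_pos h1, if_pos h2, Finset.card_insert_of_notMem hs, Finset.card_insert_of_notMem hd,
      if_pos h1.symm, if_pos h2.symm]
    push_cast; ring
  · rw [if_pos h1, if_neg h2, Finset.card_insert_of_notMem hs,
      if_pos h1.symm, if_neg (fun h : w = a.dst => h2 h.symm)]
    push_cast; ring
  · rw [if_neg h1, if_pos h2, Finset.card_insert_of_notMem hd,
      if_neg (fun h : w = a.src => h1 h.symm), if_pos h2.symm]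
    push_cast; ring
  · rw [if_neg h1, if_neg h2, if_neg (fun h : w = a.src => h1 h.symm),
      if_neg (fun h : w = a.dst => h2 h.symm)]
    push_cast; ring

lemma exc_erase {U : Finset (Arc G)} {a : Arc G} (ha : a ∈ U) (w : V) :
    exc (U.erase a) w = exc U w - (if w = a.src then 1 else 0) + (if w = a.dst then 1 else 0) := by
  have h1 : exc (insert a (U.erase a)) w
      = exc (U.erase a) w + (if w = a.src then 1 else 0) - (if w = a.dst then 1 else 0) :=
    exc_insert (Finset.notMem_erase a U) w
  rw [Finset.insert_erase ha] at h1
  omega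

lemma exc_empty (w : V) : exc (∅ : Finset (Arc G)) w = 0 := by
  simp [exc, outC, inC]

lemma getLastD_append (l₁ : List V) (x : V) (l₂ : List V) (d : V) :
    (l₁ ++ x :: l₂).getLastD d = l₂.getLastD x := by
  induction l₁ generalizing d with
  | nil => rw [List.nil_append, List.getLastD_cons]
  | cons a l ih => rw [List.cons_append, List.getLastD_cons]; exact ih a

lemma rtg_to_chain {r : V → V → Prop} {u v : V} (h : Relation.ReflTransGen r u v) :
    ∃ l : List V, List.Chain r u l ∧ l.getLastD u = v := by
  induction h using Relation.ReflTransGen.head_induction_on with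
  | refl => exact ⟨[], List.Chain.nil, rfl⟩
  | head hab _ ih =>
    obtain ⟨l, hc, hl⟩ := ih
    exact ⟨_ :: l, List.chain_cons.mpr ⟨hab, hc⟩, by rw [List.getLastD_cons]; exact hl⟩

lemma chain_nodup {r : V → V → Prop} {v : V} :
    ∀ (n : ℕ) (l : List V) (u : V), l.length ≤ n → List.Chain r u l → l.getLastD u = v →
    ∃ l' : List V, (∀ x ∈ l', x ∈ l) ∧ List.Chain r u l' ∧ l'.getLastD u = v ∧ (u :: l').Nodup := by
  intro n
  induction n with
  | zero =>
    intro l u hl hc hlast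
    rw [List.length_eq_zero_iff.mp (Nat.le_zero.mp hl)] at hc hlast ⊢
    exact ⟨[], by simp, List.Chain.nil, hlast, List.nodup_singleton u⟩
  | succ n ih =>
    intro l u hl hc hlast
    match l with
    | [] => exact ⟨[], by simp, List.Chain.nil, hlast, List.nodup_singleton u⟩
    | w :: t =>
      by_cases hu : u ∈ w :: t
      · obtain ⟨l₁, l₂, hsplit⟩ := List.append_of_mem hu
        rw [hsplit] at hc hlast
        have hc₂ : List.Chain r u l₂ := (List.isChain_cons_split.mp hc).2
        have hlast₂ : l₂.getLastD u = v := by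
          rw [getLastD_append] at hlast; exact hlast
        have hlen : l₂.length ≤ n := by
          have := congrArg List.length hsplit
          simp [List.length_append] at this
          simp at hl
          omega
        obtain ⟨l', hsub, hc', hlast', hnd⟩ := ih l₂ u hlen hc₂ hlast₂
        exact ⟨l', fun x hx => by rw [hsplit]; simp [List.mem_append]; tauto,
          hc', hlast', hnd⟩
      · replace hc : r u w ∧ List.Chain r w t := List.isChain_cons_cons.mp hc
        have hlen : t.length ≤ n := by simp at hl; omega
        obtain ⟨l', hsub, hc', hlast', hnd⟩ :=
          ih t w hlen hc.2 (by rwa [List.getLastD_cons] at hlast)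
        refine ⟨w :: l', ?_, List.chain_cons.mpr ⟨hc.1, hc'⟩,
          by rw [List.getLastD_cons]; exact hlast', ?_⟩
        · intro x hx
          rcases List.mem_cons.mp hx with rfl | hx'
          · simp
          · simp [hsub x hx']
        · rw [List.nodup_cons]
          refine ⟨fun hmem => ?_, hnd⟩
          rcases List.mem_cons.mp hmem with rfl | hmem'
          · exact hu (by simp)
          · exact hu (by simp [hsub u hmem'])

lemma augAux (U₀ : Finset (Arc G)) {v : V} :
    ∀ (l : List V) (c : V) (U : Finset (Arc G)),
      List.Chain (Rstep U₀) c l → l.getLastD c = v → (c :: l).Nodup →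
      EdgeInj U →
      (∀ (e : E) (x y : V), G.ends e = s(x, y) → x ∈ c :: l → y ∈ c :: l →
        ∀ a : Arc G, a.edge = e → (a ∈ U ↔ a ∈ U₀)) →
      ∃ U' : Finset (Arc G), EdgeInj U' ∧
        ∀ w, exc U' w = exc U w + (if w = c then 1 else 0) - (if w = v then 1 else 0) := by
  intro l
  induction l with
  | nil =>
    intro c U _ hlast _ hEI _
    refine ⟨U, hEI, fun w => ?_⟩
    simp only [List.getLastD] at hlast
    subst hlast
    split <;> omega
  | cons w t ih =>
    intro c U hchain hlast hnd hEI hagree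
    replace hchain : Rstep U₀ c w ∧ List.Chain (Rstep U₀) w t := List.isChain_cons_cons.mp hchain
    have hcw : c ∉ w :: t := by
      rw [List.nodup_cons] at hnd; exact hnd.1
    have hndt : (w :: t).Nodup := (List.nodup_cons.mp hnd).2
    have hlast' : t.getLastD w = v := by rwa [List.getLastD_cons] at hlast
    rcases hchain.1 with ⟨e, hee, hunused⟩ | ⟨a₀, ha₀, hS, hD⟩
    · -- unused edge: add the forward arc
      have hnoarc : ∀ a : Arc G, a.edge = e → a ∉ U := by
        intro a hae haU
        exact hunused a ((hagree e c w hee (by simp) (by simp) a hae).mp haU) hae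
      set a₀ : Arc G := ⟨(e, c, w), hee⟩ with ha₀def
      have ha₀e : a₀.edge = e := rfl
      have ha₀U : a₀ ∉ U := hnoarc a₀ rfl
      have hEI' : EdgeInj (insert a₀ U) := by
        intro a ha b hb hab
        rcases Finset.mem_insert.mp ha with rfl | ha' <;>
          rcases Finset.mem_insert.mp hb with rfl | hb'
        · rfl
        · exact absurd hb' (hnoarc b (by rw [← hab]; exact ha₀e))
        · exact absurd ha' (hnoarc a (by rw [hab]; exact ha₀e))
        · exact hEI a ha' b hb' hab
      have hagree' : ∀ (e' : E) (x y : V), G.ends e' = s(x, y) → x ∈ w :: t → y ∈ w :: t →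
          ∀ a : Arc G, a.edge = e' → (a ∈ insert a₀ U ↔ a ∈ U₀) := by
        intro e' x y he' hx hy a hae
        have hne : a ≠ a₀ := by
          rintro rfl
          have h1 : G.ends e' = s(c, w) := by rw [← hae, ha₀e] at he' ⊢; exact hee
          rw [he', Sym2.eq_iff] at h1
          rcases h1 with ⟨rfl, rfl⟩ | ⟨rfl, rfl⟩
          · exact hcw hx
          · exact hcw hy
        rw [Finset.mem_insert]
        rw [← hagree e' x y he' (by simp [hx]) (by simp [hy]) a hae]
        constructor
        · rintro (rfl | h)
          · exact absurd rfl hne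
          · exact h
        · exact Or.inr
      obtain ⟨U', hEI'', hexc⟩ := ih w (insert a₀ U) hchain.2 hlast' hndt hEI' hagree'
      refine ⟨U', hEI'', fun x => ?_⟩
      have h1 := hexc x
      have h2 := exc_insert ha₀U x
      have hsrc : a₀.src = c := rfl
      have hdst : a₀.dst = w := rfl
      rw [hsrc, hdst] at h2
      omega
    · -- used backward arc: remove it
      have ha₀ends : G.ends a₀.edge = s(w, c) := by rw [a₀.ends_eq, hS, hD]
      have ha₀U : a₀ ∈ U :=
        (hagree a₀.edge w c ha₀ends (by simp) (by simp) a₀ rfl).mpr ha₀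
      have hEI' : EdgeInj (U.erase a₀) := fun a ha b hb hab =>
        hEI a (Finset.mem_of_mem_erase ha) b (Finset.mem_of_mem_erase hb) hab
      have hagree' : ∀ (e' : E) (x y : V), G.ends e' = s(x, y) → x ∈ w :: t → y ∈ w :: t →
          ∀ a : Arc G, a.edge = e' → (a ∈ U.erase a₀ ↔ a ∈ U₀) := by
        intro e' x y he' hx hy a hae
        have hne : a ≠ a₀ := by
          rintro rfl
          rw [hae, he', Sym2.eq_iff] at ha₀ends
          rcases ha₀ends with ⟨rfl, rfl⟩ | ⟨rfl, rfl⟩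
          · exact hcw hy
          · exact hcw hx
        rw [Finset.mem_erase]
        rw [← hagree e' x y he' (by simp [hx]) (by simp [hy]) a hae]
        exact ⟨fun h => h.2, fun h => ⟨hne, h⟩⟩
      obtain ⟨U', hEI'', hexc⟩ := ih w (U.erase a₀) hchain.2 hlast' hndt hEI' hagree'
      refine ⟨U', hEI'', fun x => ?_⟩
      have h1 := hexc x
      have h2 := exc_erase ha₀U x
      rw [hS, hD] at h2
      omega

end Menger

end Multigraph

namespace Multigraph

section Menger2

open scoped Classical

variable {V : Type u} {E : Type v} {G : Multigraph V E} [Fintype V] [Fintype E]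

lemma augment {U : Finset (Arc G)} {u v : V} (hEI : EdgeInj U)
    (hreach : Relation.ReflTransGen (Rstep U) u v) :
    ∃ U' : Finset (Arc G), EdgeInj U' ∧
      ∀ w, exc U' w = exc U w + (if w = u then 1 else 0) - (if w = v then 1 else 0) := by
  obtain ⟨l, hc, hlast⟩ := rtg_to_chain hreach
  obtain ⟨l', _, hc', hlast', hnd⟩ := chain_nodup l.length l u le_rfl hc hlast
  exact augAux U l' u U hc' hlast' hnd hEI (fun _ _ _ _ _ _ _ _ => Iff.rfl)

lemma reach_cut {U : Finset (Arc G)} {u v : V} {j : ℕ} (hEI : EdgeInj U)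
    (hu : exc U u = j) (h0 : ∀ w, w ≠ u → w ≠ v → exc U w = 0)
    (hnv : ¬ Relation.ReflTransGen (Rstep U) u v) :
    G.cut {w | Relation.ReflTransGen (Rstep U) u w} ≤ j := by
  set R : Set V := {w | Relation.ReflTransGen (Rstep U) u w} with hR
  have huR : u ∈ R := Relation.ReflTransGen.refl
  have hvR : v ∉ R := hnv
  have hclose : ∀ x ∈ R, ∀ y, Rstep U x y → y ∈ R := fun x hx y hxy =>
    Relation.ReflTransGen.tail hx hxy
  set OutA : Finset (Arc G) := U.filter (fun a => a.src ∈ R ∧ a.dst ∉ R) with hOutA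
  have hcross : ∀ e : E, G.Crosses e R → ∃ a ∈ OutA, a.edge = e := by
    rintro e ⟨x, y, hxy, hx, hy⟩
    by_cases hused : ∀ a ∈ U, a.edge ≠ e
    · exact absurd (hclose _ hx _ (Or.inl ⟨e, hxy, hused⟩)) hy
    · push_neg at hused
      obtain ⟨a, haU, hae⟩ := hused
      have hends : s(a.src, a.dst) = s(x, y) := by rw [← a.ends_eq, hae, hxy]
      rw [Sym2.eq_iff] at hends
      rcases hends with ⟨h1, h2⟩ | ⟨h1, h2⟩
      · exact ⟨a, Finset.mem_filter.mpr ⟨haU, h1 ▸ hx, h2 ▸ hy⟩, hae⟩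
      · exact absurd (hclose _ (h2 ▸ hx) _ (Or.inr ⟨a, haU, h1, h2⟩)) hy
  have hcut_le : G.cut R ≤ OutA.card := by
    have hsub : {e | G.Crosses e R} ⊆ ↑(OutA.image Arc.edge) := by
      intro e he
      obtain ⟨a, ha, hae⟩ := hcross e he
      simp only [Finset.coe_image, Set.mem_image, Finset.mem_coe]
      exact ⟨a, ha, hae⟩
    calc G.cut R = {e | G.Crosses e R}.ncard := rfl
      _ ≤ (↑(OutA.image Arc.edge) : Set E).ncard :=
          Set.ncard_le_ncard hsub (Set.toFinite _)
      _ = (OutA.image Arc.edge).card := Set.ncard_coe_finset _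
      _ ≤ OutA.card := Finset.card_image_le
  set RF : Finset V := Finset.univ.filter (· ∈ R) with hRF
  have hmemS : ∀ a ∈ (U.filter fun a => a.src ∈ R), Arc.src a ∈ RF := by
    intro a ha
    simp only [hRF, Finset.mem_filter, Finset.mem_univ, true_and]
    exact (Finset.mem_filter.mp ha).2
  have hmemD : ∀ a ∈ (U.filter fun a => a.dst ∈ R), Arc.dst a ∈ RF := by
    intro a ha
    simp only [hRF, Finset.mem_filter, Finset.mem_univ, true_and]
    exact (Finset.mem_filter.mp ha).2
  have houtw : ∀ w ∈ RF,
      (outC U w : ℤ) = (((U.filter fun a => a.src ∈ R).filter fun a : G.Arc => a.src = w).card : ℤ) := by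
    intro w hw
    have hwR : w ∈ R := (Finset.mem_filter.mp hw).2
    have heq : ((U.filter fun a => a.src ∈ R).filter fun a : G.Arc => a.src = w)
        = U.filter fun a : G.Arc => a.src = w := by
      rw [Finset.filter_filter]
      apply Finset.filter_congr
      intro a _
      constructor
      · exact fun h => h.2
      · exact fun h => ⟨by rw [h]; exact hwR, h⟩
    rw [heq]
    rfl
  have hinw : ∀ w ∈ RF,
      (inC U w : ℤ) = (((U.filter fun a => a.dst ∈ R).filter fun a : G.Arc => a.dst = w).card : ℤ) := by
    intro w hw
    have hwR : w ∈ R := (Finset.mem_filter.mp hw).2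
    have heq : ((U.filter fun a => a.dst ∈ R).filter fun a : G.Arc => a.dst = w)
        = U.filter fun a : G.Arc => a.dst = w := by
      rw [Finset.filter_filter]
      apply Finset.filter_congr
      intro a _
      constructor
      · exact fun h => h.2
      · exact fun h => ⟨by rw [h]; exact hwR, h⟩
    rw [heq]
    rfl
  have hout : ∑ w ∈ RF, (outC U w : ℤ) = ((U.filter fun a => a.src ∈ R).card : ℤ) := by
    rw [Finset.card_eq_sum_card_fiberwise (f := Arc.src) (t := RF) hmemS, Nat.cast_sum]
    exact Finset.sum_congr rfl houtw
  have hin : ∑ w ∈ RF, (inC U w : ℤ) = ((U.filter fun a => a.dst ∈ R).card : ℤ) := by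
    rw [Finset.card_eq_sum_card_fiberwise (f := Arc.dst) (t := RF) hmemD, Nat.cast_sum]
    exact Finset.sum_congr rfl hinw
  have hsplit1 : (U.filter fun a => a.src ∈ R ∧ a.dst ∈ R).card
      + (U.filter fun a => a.src ∈ R ∧ a.dst ∉ R).card
      = (U.filter fun a => a.src ∈ R).card := by
    rw [← Finset.filter_filter, ← Finset.filter_filter]
    exact Finset.card_filter_add_card_filter_not (fun a : G.Arc => a.dst ∈ R)
  have hInA : (U.filter fun a => a.dst ∈ R ∧ a.src ∉ R) = ∅ := by
    rw [Finset.filter_eq_empty_iff]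
    rintro a haU ⟨hd, hs⟩
    exact hs (hclose _ hd _ (Or.inr ⟨a, haU, rfl, rfl⟩))
  have hsplit2 : (U.filter fun a => a.dst ∈ R ∧ a.src ∈ R).card
      + (U.filter fun a => a.dst ∈ R ∧ a.src ∉ R).card
      = (U.filter fun a => a.dst ∈ R).card := by
    rw [← Finset.filter_filter, ← Finset.filter_filter]
    exact Finset.card_filter_add_card_filter_not (fun a : G.Arc => a.src ∈ R)
  have hboth : (U.filter fun a => a.src ∈ R ∧ a.dst ∈ R).card
      = (U.filter fun a => a.dst ∈ R ∧ a.src ∈ R).card := by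
    congr 1
    apply Finset.filter_congr
    intro a _
    exact and_comm
  have hInA0 : (U.filter fun a => a.dst ∈ R ∧ a.src ∉ R).card = 0 := by
    rw [hInA]
    rfl
  have hsum : ∑ w ∈ RF, exc U w = (OutA.card : ℤ) := by
    unfold exc
    rw [Finset.sum_sub_distrib, hout, hin, hOutA]
    omega
  have hsum2 : ∑ w ∈ RF, exc U w = (j : ℤ) := by
    rw [Finset.sum_eq_single_of_mem u
      (by simp only [hRF, Finset.mem_filter, Finset.mem_univ, true_and]; exact huR)]
    · exact hu
    · intro b hb hbu
      refine h0 b hbu fun hbv => hvR ?_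
      rw [← hbv]
      exact (Finset.mem_filter.mp hb).2
  have : (OutA.card : ℤ) = (j : ℤ) := by rw [← hsum, hsum2]
  omega

lemma inv_exists {u v : V} (huv : u ≠ v) (k : ℕ)
    (hcut : ∀ A : Set V, u ∈ A → v ∉ A → k ≤ G.cut A) :
    ∀ j, j ≤ k → ∃ U : Finset (Arc G), EdgeInj U ∧ exc U u = (j : ℤ) ∧
      exc U v = -(j : ℤ) ∧ ∀ w, w ≠ u → w ≠ v → exc U w = 0 := by
  intro j
  induction j with
  | zero =>
    exact fun _ => ⟨∅, fun a ha => absurd ha (Finset.notMem_empty a),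
      by simp [exc_empty], by simp [exc_empty], fun w _ _ => exc_empty w⟩
  | succ j ih =>
    intro hjk
    obtain ⟨U, hEI, hu, hv, h0⟩ := ih (Nat.le_of_succ_le hjk)
    by_cases hreach : Relation.ReflTransGen (Rstep U) u v
    · obtain ⟨U', hEI', hexc⟩ := augment hEI hreach
      refine ⟨U', hEI', ?_, ?_, ?_⟩
      · have := hexc u; rw [if_pos rfl, if_neg huv] at this; push_cast; omega
      · have := hexc v; rw [if_neg (Ne.symm huv), if_pos rfl] at this; push_cast; omega
      · intro w hwu hwv
        have := hexc w; rw [if_neg hwu, if_neg hwv] at this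
        rw [this, h0 w hwu hwv]; ring
    · exfalso
      have hle := reach_cut hEI hu h0 hreach
      have hge := hcut {w | Relation.ReflTransGen (Rstep U) u w} Relation.ReflTransGen.refl hreach
      omega

lemma extract_one {v : V} :
    ∀ (n : ℕ) (U : Finset (Arc G)) (a : V), U.card ≤ n → EdgeInj U → a ≠ v →
      1 ≤ exc U a → (∀ w, w ≠ v → w ≠ a → 0 ≤ exc U w) →
      ∃ (p : G.Walk a v) (U' : Finset (Arc G)), U' ⊆ U ∧ EdgeInj U' ∧
        (∀ w, exc U' w = exc U w - (if w = a then 1 else 0) + (if w = v then 1 else 0)) ∧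
        (∀ e ∈ p.edges, ∀ a' ∈ U', a'.edge ≠ e) ∧
        (∀ e ∈ p.edges, ∃ a' ∈ U, a'.edge = e) := by
  intro n
  induction n with
  | zero =>
    intro U a hcard _ _ hexc _
    rw [Finset.card_eq_zero.mp (Nat.le_zero.mp hcard)] at hexc
    rw [exc_empty] at hexc
    omega
  | succ n ih =>
    intro U a hcard hEI hav hexc hnn
    obtain ⟨a₀, ha₀⟩ := Finset.card_pos.mp
      (show 0 < (U.filter fun x : G.Arc => x.src = a).card by
        have h := hexc
        unfold exc outC inC at h
        omega)
    have ha₀U : a₀ ∈ U := (Finset.mem_filter.mp ha₀).1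
    have ha₀src : a₀.src = a := (Finset.mem_filter.mp ha₀).2
    set b := a₀.dst with hbdef
    have hab : a ≠ b := ha₀src ▸ a₀.src_ne_dst
    have hends : G.ends a₀.edge = s(a, b) := by rw [a₀.ends_eq, ha₀src]
    have hU₁card : (U.erase a₀).card ≤ n := by
      have := Finset.card_erase_of_mem ha₀U
      omega
    have hEI₁ : EdgeInj (U.erase a₀) := fun x hx y hy hxy =>
      hEI x (Finset.mem_of_mem_erase hx) y (Finset.mem_of_mem_erase hy) hxy
    have hexc₁ : ∀ w, exc (U.erase a₀) w
        = exc U w - (if w = a then 1 else 0) + (if w = b then 1 else 0) := by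
      intro w
      rw [exc_erase ha₀U, ha₀src, ← hbdef]
    have hnoe : ∀ a' ∈ U.erase a₀, a'.edge ≠ a₀.edge := by
      intro a' ha' he
      exact (Finset.mem_erase.mp ha').1 (hEI a' (Finset.mem_of_mem_erase ha') a₀ ha₀U he)
    by_cases hbv : b = v
    · refine ⟨Walk.cons a₀.edge (hbv ▸ hends) (Walk.nil v), U.erase a₀,
        Finset.erase_subset _ _, hEI₁, ?_, ?_, ?_⟩
      · intro w
        rw [hexc₁ w, hbv]
      · intro e he a' ha'
        have : e = a₀.edge := by
          simpa [Walk.edges] using he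
        rw [this]
        exact hnoe a' ha'
      · intro e he
        have : e = a₀.edge := by simpa [Walk.edges] using he
        exact ⟨a₀, ha₀U, this.symm⟩
    · have h1 : 1 ≤ exc (U.erase a₀) b := by
        have := hexc₁ b
        rw [if_neg (Ne.symm hab), if_pos rfl] at this
        have hb0 : 0 ≤ exc U b := hnn b hbv (Ne.symm hab)
        omega
      have h2 : ∀ w, w ≠ v → w ≠ b → 0 ≤ exc (U.erase a₀) w := by
        intro w hwv hwb
        have := hexc₁ w
        rw [if_neg hwb] at this
        by_cases hwa : w = a
        · subst hwa
          rw [if_pos rfl] at this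
          omega
        · rw [if_neg hwa] at this
          have := hnn w hwv hwa
          omega
      obtain ⟨p, U', hU'sub, hEI', hexc', hpU', hpU⟩ :=
        ih (U.erase a₀) b hU₁card hEI₁ hbv h1 h2
      refine ⟨Walk.cons a₀.edge hends p, U', hU'sub.trans (Finset.erase_subset _ _),
        hEI', ?_, ?_, ?_⟩
      · intro w
        rw [hexc' w, hexc₁ w]
        omega
      · intro e he a' ha'
        rcases List.mem_cons.mp (by simpa [Walk.edges] using he) with rfl | he'
        · exact hnoe a' (hU'sub ha')
        · exact hpU' e he' a' ha'
      · intro e he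
        rcases List.mem_cons.mp (by simpa [Walk.edges] using he) with rfl | he'
        · exact ⟨a₀, ha₀U, rfl⟩
        · obtain ⟨a', ha', hae⟩ := hpU e he'
          exact ⟨a', Finset.mem_of_mem_erase ha', hae⟩

lemma extract_many {u v : V} (huv : u ≠ v) :
    ∀ (j : ℕ) (U : Finset (Arc G)), EdgeInj U → exc U u = (j : ℤ) →
      exc U v = -(j : ℤ) → (∀ w, w ≠ u → w ≠ v → exc U w = 0) →
      ∃ P : Fin j → G.Walk u v,
        (∀ i j', i ≠ j' → ∀ e, e ∈ (P i).edges → e ∉ (P j').edges) ∧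
        (∀ i, ∀ e ∈ (P i).edges, ∃ a ∈ U, a.edge = e) := by
  intro j
  induction j with
  | zero => exact fun U _ _ _ _ => ⟨fun i => i.elim0, fun i => i.elim0, fun i => i.elim0⟩
  | succ j ih =>
    intro U hEI hu hv h0
    obtain ⟨p, U', hU'sub, hEI', hexc', hpU', hpU⟩ :=
      extract_one U.card U u le_rfl hEI huv (by omega)
        (fun w hwv hwu => by rw [h0 w hwu hwv])
    have hu' : exc U' u = (j : ℤ) := by
      have := hexc' u
      rw [if_pos rfl, if_neg huv] at this
      push_cast
      omega
    have hv' : exc U' v = -(j : ℤ) := by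
      have := hexc' v
      rw [if_neg (Ne.symm huv), if_pos rfl] at this
      push_cast
      omega
    have h0' : ∀ w, w ≠ u → w ≠ v → exc U' w = 0 := by
      intro w hwu hwv
      have := hexc' w
      rw [if_neg hwu, if_neg hwv, h0 w hwu hwv] at this
      omega
    obtain ⟨P, hPdisj, hPU⟩ := ih U' hEI' hu' hv' h0'
    refine ⟨Fin.cons p P, ?_, ?_⟩
    · intro i j' hij e hei hej
      rcases Fin.eq_zero_or_eq_succ i with rfl | ⟨i', rfl⟩ <;>
        rcases Fin.eq_zero_or_eq_succ j' with rfl | ⟨j'', rfl⟩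
      · exact hij rfl
      · rw [Fin.cons_zero] at hei
        rw [Fin.cons_succ] at hej
        obtain ⟨a', ha', hae⟩ := hPU j'' e hej
        exact hpU' e hei a' ha' hae
      · rw [Fin.cons_zero] at hej
        rw [Fin.cons_succ] at hei
        obtain ⟨a', ha', hae⟩ := hPU i' e hei
        exact hpU' e hej a' ha' hae
      · rw [Fin.cons_succ] at hei hej
        exact hPdisj i' j'' (fun h => hij (by rw [h])) e hei hej
    · intro i e he
      rcases Fin.eq_zero_or_eq_succ i with rfl | ⟨i', rfl⟩
      · rw [Fin.cons_zero] at he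
        exact hpU e he
      · rw [Fin.cons_succ] at he
        obtain ⟨a', ha', hae⟩ := hPU i' e he
        exact ⟨a', hU'sub ha', hae⟩

/-- **Menger's theorem** (edge version) for multigraphs. -/
theorem menger {u v : V} (huv : u ≠ v) (k : ℕ)
    (hcut : ∀ A : Set V, u ∈ A → v ∉ A → k ≤ G.cut A) :
    ∃ P : Fin k → G.Walk u v, (∀ i, (P i).IsPath) ∧
      ∀ i j, i ≠ j → ∀ e, e ∈ (P i).edges → e ∉ (P j).edges := by
  obtain ⟨U, hEI, hu, hv, h0⟩ := inv_exists huv k hcut k le_rfl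
  obtain ⟨P, hPdisj, -⟩ := extract_many huv k U hEI hu hv h0
  refine ⟨fun i => (P i).bypass, fun i => Walk.bypass_isPath _, ?_⟩
  intro i j hij e hei hej
  exact hPdisj i j hij e (Walk.edges_bypass_subset _ e hei) (Walk.edges_bypass_subset _ e hej)

end Menger2

end Multigraph

namespace Multigraph

section Main

open scoped Classical

variable {V : Type u} {E : Type v} {G : Multigraph V E}

/-- A set eligible as a cut side: avoids `s`, nonempty, and some vertex other
than `s` lies outside it. -/
def Elig (s : V) (A : Set V) : Prop := s ∉ A ∧ A.Nonempty ∧ ∃ w, w ∉ A ∧ w ≠ s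

/-- A tight set: eligible with cut exactly `k`. -/
def TightSet (G : Multigraph V E) (s : V) (k : ℕ) (X : Set V) : Prop :=
  Elig s X ∧ G.cut X = k

lemma cut_ge_of_elig [Finite E] {s : V} {k : ℕ} (hG : G.SEdgeConnected s k) {A : Set V}
    (hA : Elig s A) : k ≤ G.cut A := by
  obtain ⟨hsA, ⟨a, haA⟩, w, hwA, hws⟩ := hA
  have has : a ≠ s := fun h => hsA (h ▸ haA)
  have haw : a ≠ w := fun h => hwA (h ▸ haA)
  obtain ⟨P, _, hdisj⟩ := hG a w has hws haw
  exact cut_ge_of_walks haA hwA P hdisj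

lemma crosses_incident {e : E} {s x : V} {A : Set V} (h1 : G.ends e = s(s, x))
    (hsA : s ∉ A) : G.Crosses e A ↔ x ∈ A := by
  rw [crosses_iff h1]
  constructor
  · rintro (⟨h, -⟩ | ⟨h, -⟩)
    · exact absurd h hsA
    · exact h
  · exact fun hx => Or.inr ⟨hx, hsA⟩

lemma lift_cut_ge [Finite V] [Finite E] {s : V} {k : ℕ} (e₁ e₂ : E) (x y : V)
    (h1 : G.ends e₁ = s(s, x)) (h2 : G.ends e₂ = s(s, y)) (A : Set V) (hsA : s ∉ A)
    (hcutA : k ≤ G.cut A) (heA : Even (G.cut A)) (hek : Even k)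
    (hnotight : ¬(x ∈ A ∧ y ∈ A ∧ G.cut A = k)) :
    k ≤ (G.lift e₁ e₂ x y).cut A := by
  set L := G.lift e₁ e₂ x y with hL
  set S' : Set E := {e : E | G.Crosses e A ∧ e ≠ e₁ ∧ e ≠ e₂} with hS'
  set S'sub : Set {e : E // e ≠ e₁ ∧ e ≠ e₂} := {e | G.Crosses e.1 A} with hS'sub
  have hcr_inl : ∀ e : {e : E // e ≠ e₁ ∧ e ≠ e₂},
      L.Crosses (Sum.inl e) A ↔ G.Crosses e.1 A := fun e => Iff.rfl
  have hS'im : S' = Subtype.val '' S'sub := by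
    ext e
    constructor
    · rintro ⟨hc, hne⟩
      exact ⟨⟨e, hne⟩, hc, rfl⟩
    · rintro ⟨⟨e', hne⟩, hc, rfl⟩
      exact ⟨hc, hne⟩
  have hcards : S'.ncard = S'sub.ncard := by
    rw [hS'im, Set.ncard_image_of_injective _ Subtype.val_injective]
  have hbase : (Sum.inl '' S'sub : Set _) ⊆ {e | L.Crosses e A} := by
    rintro _ ⟨e, he, rfl⟩
    exact (hcr_inl e).mpr he
  have hbase_card : S'.ncard ≤ L.cut A := by
    rw [hcards, ← Set.ncard_image_of_injective S'sub Sum.inl_injective]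
    exact Set.ncard_le_ncard hbase (Set.toFinite _)
  have hc1 : G.Crosses e₁ A ↔ x ∈ A := crosses_incident h1 hsA
  have hc2 : G.Crosses e₂ A ↔ y ∈ A := crosses_incident h2 hsA
  by_cases hx : x ∈ A <;> by_cases hy : y ∈ A
  · -- both endpoints inside: cut is at least k+2
    have hck : G.cut A ≠ k := fun h => hnotight ⟨hx, hy, h⟩
    have hcut2 : k + 2 ≤ G.cut A := by
      obtain ⟨m, hm⟩ := heA
      obtain ⟨l, hl⟩ := hek
      omega
    have hsub : {e : E | G.Crosses e A} ⊆ S' ∪ {e₁, e₂} := by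
      intro e he
      by_cases hne1 : e = e₁
      · exact Or.inr (by simp [hne1])
      · by_cases hne2 : e = e₂
        · exact Or.inr (by simp [hne2])
        · exact Or.inl ⟨he, hne1, hne2⟩
    have hupper : G.cut A ≤ S'.ncard + 2 := by
      calc G.cut A ≤ (S' ∪ {e₁, e₂}).ncard := Set.ncard_le_ncard hsub (Set.toFinite _)
        _ ≤ S'.ncard + ({e₁, e₂} : Set E).ncard := Set.ncard_union_le _ _
        _ ≤ S'.ncard + 2 := by
            have := Set.ncard_insert_le e₁ ({e₂} : Set E)
            have := Set.ncard_singleton e₂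
            omega
    omega
  · -- x in, y out: cut unchanged, uses the new edge
    have hxy : x ≠ y := fun h => hy (h ▸ hx)
    have hsub : {e : E | G.Crosses e A} ⊆ S' ∪ {e₁} := by
      intro e he
      by_cases hne1 : e = e₁
      · exact Or.inr (by simp [hne1])
      · by_cases hne2 : e = e₂
        · exact absurd (hne2 ▸ he) (fun h => hy (hc2.mp h))
        · exact Or.inl ⟨he, hne1, hne2⟩
    have hupper : G.cut A ≤ S'.ncard + 1 := by
      calc G.cut A ≤ (S' ∪ {e₁}).ncard := Set.ncard_le_ncard hsub (Set.toFinite _)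
        _ ≤ S'.ncard + 1 := by
            have := Set.ncard_union_le S' ({e₁} : Set E)
            have := Set.ncard_singleton e₁
            omega
    have hnew : L.Crosses (Sum.inr (PLift.up hxy)) A := ⟨x, y, rfl, hx, hy⟩
    have hplus : S'.ncard + 1 ≤ L.cut A := by
      have hnm : (Sum.inr (PLift.up hxy)) ∉ (Sum.inl '' S'sub : Set _) := by
        rintro ⟨e, -, h⟩
        exact Sum.inl_ne_inr h
      have hsub2 : insert (Sum.inr (PLift.up hxy)) (Sum.inl '' S'sub : Set _)
          ⊆ {e | L.Crosses e A} := by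
        intro e he
        rcases Set.mem_insert_iff.mp he with rfl | he'
        · exact hnew
        · exact hbase he'
      calc S'.ncard + 1 = (Sum.inl '' S'sub : Set _).ncard + 1 := by
            rw [hcards, Set.ncard_image_of_injective _ Sum.inl_injective]
        _ = (insert (Sum.inr (PLift.up hxy)) (Sum.inl '' S'sub : Set _)).ncard :=
            (Set.ncard_insert_of_notMem hnm (Set.toFinite _)).symm
        _ ≤ L.cut A := Set.ncard_le_ncard hsub2 (Set.toFinite _)
    omega
  · -- y in, x out: symmetric
    have hxy : x ≠ y := fun h => hx (h ▸ hy)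
    have hsub : {e : E | G.Crosses e A} ⊆ S' ∪ {e₂} := by
      intro e he
      by_cases hne2 : e = e₂
      · exact Or.inr (by simp [hne2])
      · by_cases hne1 : e = e₁
        · exact absurd (hne1 ▸ he) (fun h => hx (hc1.mp h))
        · exact Or.inl ⟨he, hne1, hne2⟩
    have hupper : G.cut A ≤ S'.ncard + 1 := by
      calc G.cut A ≤ (S' ∪ {e₂}).ncard := Set.ncard_le_ncard hsub (Set.toFinite _)
        _ ≤ S'.ncard + 1 := by
            have := Set.ncard_union_le S' ({e₂} : Set E)
            have := Set.ncard_singleton e₂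
            omega
    have hnew : L.Crosses (Sum.inr (PLift.up hxy)) A := ⟨y, x, Sym2.eq_swap, hy, hx⟩
    have hplus : S'.ncard + 1 ≤ L.cut A := by
      have hnm : (Sum.inr (PLift.up hxy)) ∉ (Sum.inl '' S'sub : Set _) := by
        rintro ⟨e, -, h⟩
        exact Sum.inl_ne_inr h
      have hsub2 : insert (Sum.inr (PLift.up hxy)) (Sum.inl '' S'sub : Set _)
          ⊆ {e | L.Crosses e A} := by
        intro e he
        rcases Set.mem_insert_iff.mp he with rfl | he'
        · exact hnew
        · exact hbase he'
      calc S'.ncard + 1 = (Sum.inl '' S'sub : Set _).ncard + 1 := by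
            rw [hcards, Set.ncard_image_of_injective _ Sum.inl_injective]
        _ = (insert (Sum.inr (PLift.up hxy)) (Sum.inl '' S'sub : Set _)).ncard :=
            (Set.ncard_insert_of_notMem hnm (Set.toFinite _)).symm
        _ ≤ L.cut A := Set.ncard_le_ncard hsub2 (Set.toFinite _)
    omega
  · -- neither endpoint inside: cut unchanged
    have hsub : {e : E | G.Crosses e A} ⊆ S' := by
      intro e he
      by_cases hne1 : e = e₁
      · exact absurd (hne1 ▸ he) (fun h => hx (hc1.mp h))
      · by_cases hne2 : e = e₂
        · exact absurd (hne2 ▸ he) (fun h => hy (hc2.mp h))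
        · exact ⟨he, hne1, hne2⟩
    have : G.cut A ≤ S'.ncard := Set.ncard_le_ncard hsub (Set.toFinite _)
    omega

end Main

end Multigraph

namespace Multigraph

section Main2

open scoped Classical

variable {V : Type u} {E : Type v} {G : Multigraph V E}

lemma liftable_of_notight [Fintype V] [Fintype E] {s : V} {k : ℕ}
    (hG : G.SEdgeConnected s k) (heven : ∀ v, Even (G.degree v)) (hek : Even k)
    {e₁ e₂ : E} {x y : V} (hne : e₁ ≠ e₂) (h1 : G.ends e₁ = s(s, x))
    (h2 : G.ends e₂ = s(s, y))
    (hnotight : ∀ X : Set V, TightSet G s k X → ¬(x ∈ X ∧ y ∈ X)) :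
    G.Liftable s k e₁ e₂ := by
  refine ⟨hne, x, y, h1, h2, ?_⟩
  intro a b ha hb hab
  have key : ∀ B : Set V, s ∉ B → B.Nonempty → (∃ w, w ∉ B ∧ w ≠ s) →
      k ≤ (G.lift e₁ e₂ x y).cut B := by
    intro B hsB hBne hBout
    have hElig : Elig s B := ⟨hsB, hBne, hBout⟩
    refine lift_cut_ge e₁ e₂ x y h1 h2 B hsB (cut_ge_of_elig hG hElig)
      (even_cut heven B) hek ?_
    rintro ⟨hx, hy, hck⟩
    exact hnotight B ⟨hElig, hck⟩ ⟨hx, hy⟩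
  letI : Fintype ({e : E // e ≠ e₁ ∧ e ≠ e₂} ⊕ PLift (x ≠ y)) := Fintype.ofFinite _
  apply menger hab k
  intro A haA hbA
  by_cases hsA : s ∈ A
  · rw [← cut_compl]
    exact key Aᶜ (fun h => h hsA) ⟨b, hbA⟩ ⟨a, fun h => h haA, ha⟩
  · exact key A hsA ⟨a, haA⟩ ⟨b, hbA, hb⟩

lemma no_all_nbrs [Finite V] [Finite E] {s : V} {k : ℕ}
    (hG : G.SEdgeConnected s k) (hdeg : 2 ≤ G.degree s) {X : Set V}
    (hX : TightSet G s k X)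
    (hall : ∀ (e : E), s ∈ G.ends e → ∀ o, G.ends e = s(s, o) → o ∈ X) : False := by
  obtain ⟨⟨hsX, ⟨x₀, hx₀⟩, w₀, hw₀X, hw₀s⟩, hcutX⟩ := hX
  set Z : Set V := {w | w ∉ X ∧ w ≠ s} with hZ
  have hZelig : Elig s Z := by
    refine ⟨fun h => h.2 rfl, ⟨w₀, hw₀X, hw₀s⟩, x₀, ?_, fun h => hsX (h ▸ hx₀)⟩
    rintro ⟨h, -⟩
    exact h hx₀
  have hcutZ : k ≤ G.cut Z := cut_ge_of_elig hG hZelig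
  set CZ : Set E := {e | G.Crosses e Z} with hCZ
  set DS : Set E := {e | s ∈ G.ends e} with hDS
  -- every edge crossing Z also crosses X, and is not incident with s
  have hCZX : ∀ e ∈ CZ, G.Crosses e X ∧ s ∉ G.ends e := by
    rintro e ⟨p, q, hpq, hp, hq⟩
    have hps : p ≠ s := hp.2
    have hpX : p ∉ X := hp.1
    have hqs : q ≠ s := by
      intro hqs2
      have hs : s ∈ G.ends e := by rw [hpq, hqs2]; simp
      have := hall e hs p (by rw [hpq, hqs2]; exact Sym2.eq_swap)
      exact hpX this
    have hqX : q ∈ X := by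
      by_contra hqX
      exact hq ⟨hqX, hqs⟩
    refine ⟨⟨q, p, by rw [hpq, Sym2.eq_swap], hqX, hpX⟩, ?_⟩
    rw [hpq, Sym2.mem_iff]
    rintro (rfl | rfl)
    · exact hps rfl
    · exact hqs rfl
  have hDSX : ∀ e ∈ DS, G.Crosses e X := by
    intro e he
    obtain ⟨o, ho, hos⟩ := mem_other G he
    exact ⟨o, s, by rw [ho, Sym2.eq_swap], hall e he o ho, hsX⟩
  have hdisj : Disjoint CZ DS := by
    rw [Set.disjoint_left]
    intro e heZ heS
    exact (hCZX e heZ).2 heS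
  have hsub : CZ ∪ DS ⊆ {e | G.Crosses e X} := by
    intro e he
    rcases he with he | he
    · exact (hCZX e he).1
    · exact hDSX e he
  have hcount : G.cut Z + G.degree s ≤ G.cut X := by
    calc G.cut Z + G.degree s = (CZ ∪ DS).ncard :=
        (Set.ncard_union_eq hdisj (Set.toFinite _) (Set.toFinite _)).symm
      _ ≤ G.cut X := Set.ncard_le_ncard hsub (Set.toFinite _)
  omega

lemma tight_union [Fintype V] [Fintype E] {s : V} {k : ℕ} (hG : G.SEdgeConnected s k)
    {X Y : Set V} (hX : TightSet G s k X) (hY : TightSet G s k Y)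
    (hXY : (X ∩ Y).Nonempty) (hout : ∃ w, w ∉ X ∪ Y ∧ w ≠ s) :
    TightSet G s k (X ∪ Y) := by
  obtain ⟨⟨hsX, hXne, wX, hwX, hwXs⟩, hcX⟩ := hX
  obtain ⟨⟨hsY, hYne, -⟩, hcY⟩ := hY
  have hEligInter : Elig s (X ∩ Y) := by
    refine ⟨fun h => hsX h.1, hXY, wX, fun h => hwX h.1, hwXs⟩
  have hEligUnion : Elig s (X ∪ Y) := by
    refine ⟨fun h => h.elim hsX hsY, hXne.mono Set.subset_union_left, hout⟩
  have h1 : k ≤ G.cut (X ∩ Y) := cut_ge_of_elig hG hEligInter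
  have h2 : k ≤ G.cut (X ∪ Y) := cut_ge_of_elig hG hEligUnion
  have h3 := G.cut_submod X Y
  exact ⟨hEligUnion, by omega⟩

lemma tight_overlap_contra [Fintype V] [Fintype E] {s : V} {k : ℕ}
    (hG : G.SEdgeConnected s k) {X Y : Set V} (hX : TightSet G s k X)
    (hY : TightSet G s k Y) (hfull : ∀ w, w ≠ s → w ∈ X ∪ Y)
    {f : E} {p : V} (hf : G.ends f = s(s, p)) (hpX : p ∈ X) (hpY : p ∈ Y) : False := by
  obtain ⟨⟨hsX, hXne, wX, hwX, hwXs⟩, hcX⟩ := hX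
  obtain ⟨⟨hsY, hYne, wY, hwY, hwYs⟩, hcY⟩ := hY
  have hXdY : (X \ Y).Nonempty :=
    ⟨wY, ((Set.mem_union _ _ _).mp (hfull wY hwYs)).resolve_right hwY, hwY⟩
  have hYdX : (Y \ X).Nonempty :=
    ⟨wX, ((Set.mem_union _ _ _).mp (hfull wX hwXs)).resolve_left hwX, hwX⟩
  obtain ⟨q, hqY, hqX⟩ := hYdX
  obtain ⟨r, hrX, hrY⟩ := hXdY
  have hE1 : Elig s (X \ Y) := ⟨fun h => hsX h.1, ⟨r, hrX, hrY⟩, q, fun h => hqX h.1,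
    fun h => hsY (h ▸ hqY)⟩
  have hE2 : Elig s (Y \ X) := ⟨fun h => hsY h.1, ⟨q, hqY, hqX⟩, r, fun h => hrY h.1,
    fun h => hsX (h ▸ hrX)⟩
  have h1 : k ≤ G.cut (X \ Y) := cut_ge_of_elig hG hE1
  have h2 : k ≤ G.cut (Y \ X) := cut_ge_of_elig hG hE2
  have hmem : f ∈ G.btwSet (X ∩ Y) (X ∪ Y)ᶜ := by
    refine ⟨p, s, by rw [hf, Sym2.eq_swap], ⟨hpX, hpY⟩, ?_⟩
    rintro (h | h)
    · exact hsX h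
    · exact hsY h
  have h3 : 1 ≤ (G.btwSet (X ∩ Y) (X ∪ Y)ᶜ).ncard :=
    (Set.ncard_pos (Set.toFinite _)).mpr ⟨f, hmem⟩
  have h4 := G.cut_posimod X Y
  omega

end Main2

end Multigraph

/-- **Lemma (Thomassen).** Let `k` be a positive even integer and `s` a vertex of
degree at least `2` in an `(s,k)`-edge-connected finite graph `G` all of whose
vertices have even degree. Then the complement of `L(G,s,k)` is disconnected. -/
theorem lifting_graph_eulerian {V : Type u} {E : Type v} [Finite V] [Finite E]
    (G : Multigraph V E) (s : V) (k : ℕ)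
    (hk : 0 < k) (hke : Even k)
    (hG : G.SEdgeConnected s k)
    (heven : ∀ v : V, Even (G.degree v))
    (hdeg : 2 ≤ G.degree s) :
    ¬ ((G.liftingGraph s k)ᶜ).Connected := by
  classical
  letI : Fintype V := Fintype.ofFinite V
  letI : Fintype E := Fintype.ofFinite E
  intro hconn
  -- two distinct edges at `s`
  have h2 : 1 < {e : E | s ∈ G.ends e}.ncard := by
    have : G.degree s = {e : E | s ∈ G.ends e}.ncard := rfl
    omega
  obtain ⟨a0, b0, ha0, hb0, hab0⟩ := (Set.one_lt_ncard_iff (Set.toFinite _)).mp h2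
  -- the neighbour of `s` along an incident edge
  have hoth : ∀ f : {e : E // s ∈ G.ends e}, ∃ o, G.ends f.1 = s(s, o) ∧ o ≠ s :=
    fun f => Multigraph.mem_other G f.2
  choose nb hnb hnbs using hoth
  set Bad : {e : E // s ∈ G.ends e} → {e : E // s ∈ G.ends e} → Prop :=
    fun f g => ∃ X, Multigraph.TightSet G s k X ∧ nb f ∈ X ∧ nb g ∈ X with hBad
  have hlift : ∀ f g, f ≠ g → ¬ Bad f g → (G.liftingGraph s k).Adj f g := by
    intro f g hfg hb
    have hne : f.1 ≠ g.1 := fun h => hfg (Subtype.ext h)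
    refine Or.inl (Multigraph.liftable_of_notight hG heven hke hne (hnb f) (hnb g) ?_)
    rintro X hX ⟨hx, hy⟩
    exact hb ⟨X, hX, hx, hy⟩
  have hpart : ∃ (S : Set {e : E // s ∈ G.ends e}), ∃ f0 g0, f0 ∈ S ∧ g0 ∉ S ∧
      ∀ f ∈ S, ∀ g, g ∉ S → ¬ Bad f g := by
    by_cases hbad : ∃ f g, f ≠ g ∧ Bad f g
    · obtain ⟨f₁, g₁, hfg1, X₀, hX₀, hn1, hn2⟩ := hbad
      set C : Set (Set V) :=
        {X | Multigraph.TightSet G s k X ∧ 1 < {f | nb f ∈ X}.ncard} with hC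
      have hX₀C : X₀ ∈ C :=
        ⟨hX₀, (Set.one_lt_ncard_iff (Set.toFinite _)).mpr ⟨f₁, g₁, hn1, hn2, hfg1⟩⟩
      obtain ⟨X, hXC, hXmax⟩ :=
        Set.Finite.exists_maximalFor id C (Set.toFinite _) ⟨X₀, hX₀C⟩
      obtain ⟨f₂, g₂, hf₂, hg₂, hfg₂⟩ := (Set.one_lt_ncard_iff (Set.toFinite _)).mp hXC.2
      have hg0 : ∃ g0, nb g0 ∉ X := by
        by_contra hg0
        push_neg at hg0
        refine Multigraph.no_all_nbrs hG hdeg hXC.1 ?_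
        intro e hse o ho
        have h1 : s(s, o) = s(s, nb ⟨e, hse⟩) := by rw [← ho, ← hnb ⟨e, hse⟩]
        rw [Sym2.eq_iff] at h1
        rcases h1 with ⟨-, rfl⟩ | ⟨hs1, rfl⟩
        · exact hg0 ⟨e, hse⟩
        · exact absurd hs1.symm (hnbs ⟨e, hse⟩)
      obtain ⟨g0, hg0X⟩ := hg0
      refine ⟨{f | nb f ∈ X}, f₂, g0, hf₂, hg0X, ?_⟩
      rintro f hfS g hgS ⟨Y, hY, hfY, hgY⟩
      by_cases hout : ∃ w, w ∉ X ∪ Y ∧ w ≠ s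
      · have hXY : Multigraph.TightSet G s k (X ∪ Y) :=
          Multigraph.tight_union hG hXC.1 hY ⟨nb f, hfS, hfY⟩ hout
        have hXYC : X ∪ Y ∈ C := by
          refine ⟨hXY, lt_of_lt_of_le hXC.2 (Set.ncard_le_ncard ?_ (Set.toFinite _))⟩
          exact fun f hf => Or.inl hf
        have heq : X = X ∪ Y := le_antisymm Set.subset_union_left (hXmax hXYC Set.subset_union_left)
        exact hgS (by rw [Set.mem_setOf_eq, heq]; exact Or.inr hgY)
      · push_neg at hout
        have hfull : ∀ w, w ≠ s → w ∈ X ∪ Y := by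
          intro w hw
          by_contra hwXY
          exact hw (hout w hwXY)
        exact Multigraph.tight_overlap_contra hG hXC.1 hY hfull (hnb f) hfS hfY
    · push_neg at hbad
      refine ⟨{⟨a0, ha0⟩}, ⟨a0, ha0⟩, ⟨b0, hb0⟩, rfl, ?_, ?_⟩
      · intro h
        rw [Set.mem_singleton_iff] at h
        exact hab0 (congrArg Subtype.val h).symm
      · intro f hf g hg
        rw [Set.mem_singleton_iff] at hf
        refine hbad f g ?_
        intro h
        exact hg (by rw [← h, hf]; rfl)
  obtain ⟨S, f0, g0, hf0, hg0, hcross⟩ := hpart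
  obtain ⟨p⟩ := hconn.preconnected f0 g0
  suffices claim : ∀ (y z : {e : E // s ∈ G.ends e})
      (q : ((G.liftingGraph s k)ᶜ).Walk y z), y ∈ S → z ∈ S from
    hg0 (claim f0 g0 p hf0)
  intro y z q
  induction q with
  | nil => exact id
  | @cons y' v' z' h q ih =>
    intro hy
    apply ih
    by_contra hv
    obtain ⟨hne, hnadj⟩ := (SimpleGraph.compl_adj _ _ _).mp h
    exact hnadj (hlift y' v' hne (hcross y' hy v' hv))
end

section
/- Let G be a finite graph and let A_1 and A_2 be any two subsets of its vertex set. Then 2·[ |δ(A_1)| + |δ(A_2)| − ( |δ(A_1 ∩ A_2 : complement of A_1 ∪ A_2)| + |δ(A_2 ∖ A_1 : A_1 ∖ A_2)| ) ] = |δ(A_1 ∩ A_2)| + |δ(A_2 ∖ A_1)| + |δ(A_1 ∖ A_2)| + |δ(complement of A_1 ∪ A_2)|. -/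
namespace Multigraph

variable {V : Type u} {E : Type v}

/-- The boundary `δ(A)` of a set `A` of vertices: the set of edges with exactly one
end-vertex in `A`. -/
def boundary (G : Multigraph V E) (A : Set V) : Set E :=
  {e : E | ∃ a b, G.ends e = s(a, b) ∧ a ∈ A ∧ b ∉ A}

/-- `δ(A:B)`: the set of edges with one end-vertex in `A` and the other in `B`. -/
def boundaryBetween (G : Multigraph V E) (A B : Set V) : Set E :=
  {e : E | ∃ a b, G.ends e = s(a, b) ∧ a ∈ A ∧ b ∈ B}

end Multigraph

/-- **Equation (2.1).** For any two vertex sets `A₁, A₂` of a finite graph `G`,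
`2·[|δ(A₁)| + |δ(A₂)| − (|δ(A₁∩A₂ : (A₁∪A₂)ᶜ)| + |δ(A₂∖A₁ : A₁∖A₂)|)]
  = |δ(A₁∩A₂)| + |δ(A₂∖A₁)| + |δ(A₁∖A₂)| + |δ((A₁∪A₂)ᶜ)|`. -/
theorem cut_counting_identity {V : Type u} {E : Type v} [Finite V] [Finite E]
    (G : Multigraph V E) (A₁ A₂ : Set V) :
    (2 : ℤ) * (((G.boundary A₁).ncard : ℤ) + ((G.boundary A₂).ncard : ℤ) -
        (((G.boundaryBetween (A₁ ∩ A₂) ((A₁ ∪ A₂)ᶜ)).ncard : ℤ) +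
          ((G.boundaryBetween (A₂ \ A₁) (A₁ \ A₂)).ncard : ℤ))) =
      ((G.boundary (A₁ ∩ A₂)).ncard : ℤ) + ((G.boundary (A₂ \ A₁)).ncard : ℤ) +
        ((G.boundary (A₁ \ A₂)).ncard : ℤ) + ((G.boundary ((A₁ ∪ A₂)ᶜ)).ncard : ℤ) := by
  classical
  cases nonempty_fintype E
  have key : ∀ (S : Set E), (S.ncard : ℤ) = ∑ e : E, if e ∈ S then 1 else 0 := by
    intro S
    have h1 : S.toFinset = Finset.univ.filter (· ∈ S) := by ext x; simp
    rw [Set.ncard_eq_toFinset_card', h1, Finset.card_filter]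
    push_cast
    rfl
  simp only [key, ← Finset.sum_add_distrib, ← Finset.sum_sub_distrib]
  rw [Finset.mul_sum]
  apply Finset.sum_congr rfl
  intro e _
  obtain ⟨a, b, h⟩ : ∃ a b, G.ends e = s(a, b) := by
    obtain ⟨⟨a, b⟩, hab⟩ := Quot.exists_rep (G.ends e)
    exact ⟨a, b, hab.symm⟩
  have hb : ∀ (A : Set V), e ∈ G.boundary A ↔ ((a ∈ A ∧ b ∉ A) ∨ (b ∈ A ∧ a ∉ A)) := by
    intro A
    simp only [Multigraph.boundary, Set.mem_setOf_eq, h, Sym2.eq_iff]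
    constructor
    · rintro ⟨x, y, (⟨rfl, rfl⟩ | ⟨rfl, rfl⟩), hx, hy⟩ <;> tauto
    · rintro (⟨h1, h2⟩ | ⟨h1, h2⟩)
      exacts [⟨a, b, Or.inl ⟨rfl, rfl⟩, h1, h2⟩, ⟨b, a, Or.inr ⟨rfl, rfl⟩, h1, h2⟩]
  have hbb : ∀ (A B : Set V), e ∈ G.boundaryBetween A B ↔
      ((a ∈ A ∧ b ∈ B) ∨ (b ∈ A ∧ a ∈ B)) := by
    intro A B
    simp only [Multigraph.boundaryBetween, Set.mem_setOf_eq, h, Sym2.eq_iff]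
    constructor
    · rintro ⟨x, y, (⟨rfl, rfl⟩ | ⟨rfl, rfl⟩), hx, hy⟩ <;> tauto
    · rintro (⟨h1, h2⟩ | ⟨h1, h2⟩)
      exacts [⟨a, b, Or.inl ⟨rfl, rfl⟩, h1, h2⟩, ⟨b, a, Or.inr ⟨rfl, rfl⟩, h1, h2⟩]
  simp only [hb, hbb, Set.mem_inter_iff, Set.mem_union, Set.mem_diff, Set.mem_compl_iff]
  by_cases ha1 : a ∈ A₁ <;> by_cases ha2 : a ∈ A₂ <;>
    by_cases hb1 : b ∈ A₁ <;> by_cases hb2 : b ∈ A₂ <;>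
      simp [ha1, ha2, hb1, hb2]
end

section
/- Let k be a positive integer, G a finite (s,k)-edge-connected graph, and sx, sy a pair of edges incident with s that are adjacent in L(G,s,k) (so the lift G_{sx,sy} is (s,k)-edge-connected). If su and sv are edges incident with s that are distinct from sx and sy and are not adjacent in L(G,s,k), then su and sv are not adjacent in L(G_{sx,sy},s,k). In other words, the k-lifting graph L(G_{sx,sy},s,k) is a subgraph of L(G,s,k). -/
namespace Multigraph

variable {V : Type u} {E : Type v} {E' : Type w} {G : Multigraph V E}

@[simp] lemma Walk.support_nil {v : V} : (Walk.nil (G := G) v).support = [v] := rfl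
@[simp] lemma Walk.support_cons {u v w : V} (e : E) (h : G.ends e = s(u, v))
    (p : G.Walk v w) : (Walk.cons e h p).support = u :: p.support := rfl
@[simp] lemma Walk.edges_nil {v : V} : (Walk.nil (G := G) v).edges = [] := rfl
@[simp] lemma Walk.edges_cons {u v w : V} (e : E) (h : G.ends e = s(u, v))
    (p : G.Walk v w) : (Walk.cons e h p).edges = e :: p.edges := rfl

/-- From any occurrence of `u` on a walk one can extract the suffix walk from `u`. -/
theorem Walk.exists_suffix {u : V} :
    ∀ {w v : V} (q : G.Walk w v), u ∈ q.support →
      ∃ r : G.Walk u v, (∀ e ∈ r.edges, e ∈ q.edges) ∧ ∃ l, q.support = l ++ r.support := by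
  intro w v q
  induction q with
  | nil w =>
      intro hu
      simp only [Walk.support_nil, List.mem_singleton] at hu
      subst hu
      exact ⟨.nil u, by simp, [], rfl⟩
  | @cons u' v' w' e h p ih =>
      intro hu
      simp only [Walk.support_cons, List.mem_cons] at hu
      rcases hu with rfl | hu
      · exact ⟨.cons e h p, fun e' he' => he', [], rfl⟩
      · obtain ⟨r, hr, l, hl⟩ := ih hu
        exact ⟨r, fun e' he' => List.mem_cons_of_mem _ (hr e' he'), u' :: l, by simp [hl]⟩

/-- Every walk contains a path with the same endpoints using a subset of its edges. -/
theorem Walk.exists_isPath : ∀ {u v : V} (p : G.Walk u v),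
    ∃ q : G.Walk u v, q.IsPath ∧ ∀ e ∈ q.edges, e ∈ p.edges := by
  intro u v p
  induction p with
  | nil w => exact ⟨.nil w, by simp [Walk.IsPath], by simp⟩
  | @cons u' v' w' e h p ih =>
      obtain ⟨q, hq, hqe⟩ := ih
      by_cases hu : u' ∈ q.support
      · obtain ⟨r, hre, l, hl⟩ := q.exists_suffix hu
        refine ⟨r, ?_, ?_⟩
        · have := hq
          unfold Walk.IsPath at this ⊢
          rw [hl] at this
          exact this.of_append_right
        · exact fun e' he' => List.mem_cons_of_mem _ (hqe e' (hre e' he'))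
      · refine ⟨.cons e h q, ?_, ?_⟩
        · unfold Walk.IsPath at hq ⊢
          simpa using ⟨hu, hq⟩
        · intro e' he'
          simp only [Walk.edges_cons, List.mem_cons] at he' ⊢
          rcases he' with rfl | he'
          · exact Or.inl rfl
          · exact Or.inr (hqe e' he')

/-- Walks can be transported along an ends-preserving map of edges. -/
theorem Walk.exists_map {G' : Multigraph V E'} (φ : E → E')
    (hφ : ∀ e, G'.ends (φ e) = G.ends e) :
    ∀ {u v : V} (p : G.Walk u v),
      ∃ q : G'.Walk u v, q.edges = p.edges.map φ ∧ q.support = p.support := by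
  intro u v p
  induction p with
  | nil w => exact ⟨.nil w, by simp, rfl⟩
  | @cons u' v' w' e h p ih =>
      obtain ⟨q, hqe, hqs⟩ := ih
      exact ⟨.cons (φ e) (by rw [hφ]; exact h) q, by simp [hqe], by simp [hqs]⟩

/-- `(s,k)`-edge-connectivity transports along an injective ends-preserving edge map. -/
theorem SEdgeConnected.of_map {G' : Multigraph V E'} {s : V} {k : ℕ} (φ : E → E')
    (hinj : ∀ e e', φ e = φ e' → e = e') (hφ : ∀ e, G'.ends (φ e) = G.ends e)
    (h : G.SEdgeConnected s k) : G'.SEdgeConnected s k := by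
  intro u v hu hv huv
  obtain ⟨P, hP, hd⟩ := h u v hu hv huv
  choose Q hQe hQs using fun i => Walk.exists_map φ hφ (P i)
  refine ⟨Q, fun i => ?_, fun i j hij e hei hej => ?_⟩
  · unfold Walk.IsPath
    rw [hQs]
    exact hP i
  · rw [hQe] at hei hej
    obtain ⟨a, ha, rfl⟩ := List.mem_map.mp hei
    obtain ⟨b, hb, hab⟩ := List.mem_map.mp hej
    exact hd i j hij a ha (by rwa [hinj _ _ hab] at hb)

/-- Any walk in a lift `G_{e₁,e₂}` can be converted to a walk in `G`, using `e₁,e₂`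
in place of the new edge. -/
theorem exists_unlift_walk {e₁ e₂ : E} {x y s : V}
    (h₁ : G.ends e₁ = s(s, x)) (h₂ : G.ends e₂ = s(s, y)) :
    ∀ {u v : V} (p : (G.lift e₁ e₂ x y).Walk u v), ∃ q : G.Walk u v,
      ∀ e ∈ q.edges, (∃ he : e ≠ e₁ ∧ e ≠ e₂, Sum.inl ⟨e, he⟩ ∈ p.edges) ∨
        ((e = e₁ ∨ e = e₂) ∧ ∃ g, Sum.inr g ∈ p.edges) := by
  intro u v p
  induction p with
  | nil w => exact ⟨.nil w, by simp⟩
  | @cons u' v' w' ee h p ih =>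
      obtain ⟨q, hq⟩ := ih
      rcases ee with ⟨e, he⟩ | g
      · refine ⟨.cons e h q, ?_⟩
        intro e' he'
        replace he' : e' = e ∨ e' ∈ q.edges := List.mem_cons.mp he'
        rcases he' with rfl | he'
        · exact Or.inl ⟨he, by simp⟩
        · rcases hq e' he' with ⟨he'', hm⟩ | ⟨hc, g, hm⟩
          · exact Or.inl ⟨he'', List.mem_cons_of_mem _ hm⟩
          · exact Or.inr ⟨hc, g, List.mem_cons_of_mem _ hm⟩
      · have h' : s(x, y) = s(u', v') := h
        rcases Sym2.eq_iff.mp h' with ⟨hx, hy⟩ | ⟨hx, hy⟩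
        · refine ⟨.cons e₁ (by rw [h₁, hx]; exact Sym2.eq_swap)
            (.cons e₂ (by rw [h₂, hy]) q), ?_⟩
          intro e' he'
          simp only [Walk.edges_cons, List.mem_cons] at he'
          rcases he' with rfl | rfl | he'
          · exact Or.inr ⟨Or.inl rfl, g, by simp⟩
          · exact Or.inr ⟨Or.inr rfl, g, by simp⟩
          · rcases hq e' he' with ⟨he'', hm⟩ | ⟨hc, g', hm⟩
            · exact Or.inl ⟨he'', List.mem_cons_of_mem _ hm⟩
            · exact Or.inr ⟨hc, g', List.mem_cons_of_mem _ hm⟩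
        · refine ⟨.cons e₂ (by rw [h₂, hy]; exact Sym2.eq_swap)
            (.cons e₁ (by rw [h₁, hx]) q), ?_⟩
          intro e' he'
          simp only [Walk.edges_cons, List.mem_cons] at he'
          rcases he' with rfl | rfl | he'
          · exact Or.inr ⟨Or.inr rfl, g, by simp⟩
          · exact Or.inr ⟨Or.inl rfl, g, by simp⟩
          · rcases hq e' he' with ⟨he'', hm⟩ | ⟨hc, g', hm⟩
            · exact Or.inl ⟨he'', List.mem_cons_of_mem _ hm⟩
            · exact Or.inr ⟨hc, g', List.mem_cons_of_mem _ hm⟩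

/-- If a lift of `G` is `(s,k)`-edge-connected then so is `G`. -/
theorem SEdgeConnected.unlift {e₁ e₂ : E} {x y s : V} {k : ℕ}
    (h₁ : G.ends e₁ = s(s, x)) (h₂ : G.ends e₂ = s(s, y))
    (h : (G.lift e₁ e₂ x y).SEdgeConnected s k) : G.SEdgeConnected s k := by
  intro u v hu hv huv
  obtain ⟨P, hP, hd⟩ := h u v hu hv huv
  choose Q hQ using fun i => exists_unlift_walk h₁ h₂ (P i)
  choose R hR hRe using fun i => Walk.exists_isPath (Q i)
  refine ⟨R, hR, fun i j hij e hei hej => ?_⟩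
  have t1 := hQ i e (hRe i e hei)
  have t2 := hQ j e (hRe j e hej)
  rcases t1 with ⟨he, hm⟩ | ⟨hc, g, hm⟩ <;> rcases t2 with ⟨he', hm'⟩ | ⟨hc', g', hm'⟩
  · exact hd i j hij _ hm hm'
  · rcases hc' with rfl | rfl
    · exact he.1 rfl
    · exact he.2 rfl
  · rcases hc with rfl | rfl
    · exact he'.1 rfl
    · exact he'.2 rfl
  · have hg : g = g' := Subsingleton.elim _ _
    subst hg
    exact hd i j hij _ hm hm'

/-- Key lemma: liftability in a lift implies liftability in the original graph. -/
theorem liftable_of_lift_liftable {s : V} {k : ℕ} {e₁ e₂ : E} {x y : V}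
    (h₁ : G.ends e₁ = s(s, x)) (h₂ : G.ends e₂ = s(s, y))
    {f₁ f₂ : E} (hf₁e : f₁ ≠ e₁ ∧ f₁ ≠ e₂) (hf₂e : f₂ ≠ e₁ ∧ f₂ ≠ e₂)
    (hL : (G.lift e₁ e₂ x y).Liftable s k (Sum.inl ⟨f₁, hf₁e⟩) (Sum.inl ⟨f₂, hf₂e⟩)) :
    G.Liftable s k f₁ f₂ := by
  obtain ⟨hne, a, b, ha, hb, hcon⟩ := hL
  have hff : f₁ ≠ f₂ := fun h => hne (by subst h; rfl)
  have ha' : G.ends f₁ = s(s, a) := ha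
  have hb' : G.ends f₂ = s(s, b) := hb
  refine ⟨hff, a, b, ha', hb', ?_⟩
  have he₁f : e₁ ≠ f₁ ∧ e₁ ≠ f₂ := ⟨hf₁e.1.symm, hf₂e.1.symm⟩
  have he₂f : e₂ ≠ f₁ ∧ e₂ ≠ f₂ := ⟨hf₁e.2.symm, hf₂e.2.symm⟩
  apply SEdgeConnected.unlift (e₁ := Sum.inl ⟨e₁, he₁f⟩) (e₂ := Sum.inl ⟨e₂, he₂f⟩)
    (x := x) (y := y) h₁ h₂
  refine SEdgeConnected.of_map (G := (G.lift e₁ e₂ x y).lift (Sum.inl ⟨f₁, hf₁e⟩)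
    (Sum.inl ⟨f₂, hf₂e⟩) a b)
    (fun ee => match ee with
      | .inl ⟨.inl ⟨e, he⟩, hf⟩ =>
          .inl ⟨.inl ⟨e, fun h => hf.1 (by subst h; rfl), fun h => hf.2 (by subst h; rfl)⟩,
            fun h => he.1 (by injection h with h'; exact congrArg Subtype.val h'),
            fun h => he.2 (by injection h with h'; exact congrArg Subtype.val h')⟩
      | .inl ⟨.inr g, _⟩ => .inr g
      | .inr g => .inl ⟨.inr g, Sum.inr_ne_inl, Sum.inr_ne_inl⟩)
    ?_ ?_ hcon
  · rintro (⟨(⟨e, he⟩ | g), hf⟩ | g) (⟨(⟨e', he'⟩ | g'), hf'⟩ | g') hEq <;>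
      simp_all <;> try rfl
  · rintro (⟨(⟨e, he⟩ | g), hf⟩ | g) <;> rfl

end Multigraph

/-- If a pair of edges `f₁, f₂` at `s` is not liftable in `G`, then it is also not
liftable in the lift `G_{e₁,e₂}` (performed on a liftable pair `e₁, e₂` at `s`);
that is, `L(G_{e₁,e₂}, s, k)` is a subgraph of `L(G,s,k)`. -/
theorem lifting_graph_monotone {V : Type u} {E : Type v} [Finite V] [Finite E]
    (G : Multigraph V E) (s : V) (k : ℕ) (hk : 0 < k)
    (hG : G.SEdgeConnected s k)
    (e₁ e₂ : E) (x y : V)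
    (h₁ : G.ends e₁ = s(s, x)) (h₂ : G.ends e₂ = s(s, y)) (hne : e₁ ≠ e₂)
    (hlift : (G.lift e₁ e₂ x y).SEdgeConnected s k)
    (f₁ f₂ : E) (hf₁ : s ∈ G.ends f₁) (hf₂ : s ∈ G.ends f₂)
    (hf₁e : f₁ ≠ e₁ ∧ f₁ ≠ e₂) (hf₂e : f₂ ≠ e₁ ∧ f₂ ≠ e₂) (hff : f₁ ≠ f₂)
    (hnadj : ¬ (G.Liftable s k f₁ f₂ ∨ G.Liftable s k f₂ f₁)) :
    ¬ ((G.lift e₁ e₂ x y).Liftable s k (Sum.inl ⟨f₁, hf₁e⟩) (Sum.inl ⟨f₂, hf₂e⟩) ∨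
       (G.lift e₁ e₂ x y).Liftable s k (Sum.inl ⟨f₂, hf₂e⟩) (Sum.inl ⟨f₁, hf₁e⟩)) := by
  rintro (h | h)
  · exact hnadj (Or.inl (Multigraph.liftable_of_lift_liftable h₁ h₂ hf₁e hf₂e h))
  · exact hnadj (Or.inr (Multigraph.liftable_of_lift_liftable h₁ h₂ hf₂e hf₁e h))
end

section
/- Let k be a positive integer, let G be a k-edge-connected infinite graph, and let T be a finite set of vertices of G. Then G has a countable k-edge-connected subgraph containing T. -/
namespace Multigraph
namespace Walk

variable {V : Type u} {E : Type v} {G : Multigraph V E}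

theorem start_mem_support : ∀ {a b : V} (p : G.Walk a b), a ∈ p.support
  | _, _, .nil _ => by simp [support]
  | _, _, .cons e h p => by simp [support]

theorem mem_support_of_mem_edges : ∀ {a b : V} (p : G.Walk a b) (e : E),
    e ∈ p.edges → ∀ x, x ∈ G.ends e → x ∈ p.support
  | _, _, .nil _, e, he, x, hx => by simp [edges] at he
  | a, b, .cons f h p, e, he, x, hx => by
      simp only [edges, List.mem_cons] at he
      rcases he with rfl | he
      · rw [h] at hx
        rcases Sym2.mem_iff.mp hx with rfl | rfl
        · simp [support]
        · simp only [support, List.mem_cons]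
          exact Or.inr (start_mem_support p)
      · simp only [support, List.mem_cons]
        exact Or.inr (mem_support_of_mem_edges p e he x hx)

end Walk
end Multigraph

/-- Every `k`-edge-connected infinite graph `G` has, for each finite set `T` of
vertices, a countable `k`-edge-connected subgraph containing `T`. -/
theorem countable_subgraph {V : Type u} {E : Type v} (G : Multigraph V E) (k : ℕ)
    (hk : 0 < k) [Infinite V]
    (hG : G.EdgeConnected k) (T : Set V) (hT : T.Finite) :
    ∃ (V' : Set V) (E' : Set E),
      T ⊆ V' ∧ V'.Countable ∧ E'.Countable ∧
      (∀ e ∈ E', ∀ v ∈ G.ends e, v ∈ V') ∧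
      ∀ u v : V, u ∈ V' → v ∈ V' → u ≠ v →
        ∃ P : Fin k → G.Walk u v,
          (∀ i, (P i).IsPath) ∧
          (∀ i, ∀ x ∈ (P i).support, x ∈ V') ∧
          (∀ i, ∀ e ∈ (P i).edges, e ∈ E') ∧
          ∀ i j, i ≠ j → ∀ e, e ∈ (P i).edges → e ∉ (P j).edges := by
  classical
  choose P hPpath hPdisj using hG
  -- vertex and edge sets attached to a pair of vertices
  set fV : V → V → Set V := fun u v =>
    if h : u = v then ∅ else ⋃ i : Fin k, {x | x ∈ (P u v h i).support} with hfV
  set fE : V → V → Set E := fun u v =>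
    if h : u = v then ∅ else ⋃ i : Fin k, {e | e ∈ (P u v h i).edges} with hfE
  have hfVfin : ∀ u v, (fV u v).Finite := by
    intro u v
    rw [hfV]
    dsimp only
    split
    · exact Set.finite_empty
    · exact Set.finite_iUnion fun i => List.finite_toSet _
  have hfEfin : ∀ u v, (fE u v).Finite := by
    intro u v
    rw [hfE]
    dsimp only
    split
    · exact Set.finite_empty
    · exact Set.finite_iUnion fun i => List.finite_toSet _
  -- stages
  set S : ℕ → Set V := fun n =>
    Nat.rec T (fun _ Sn => Sn ∪ ⋃ u ∈ Sn, ⋃ v ∈ Sn, fV u v) n with hS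
  have hSsucc : ∀ n, S (n + 1) = S n ∪ ⋃ u ∈ S n, ⋃ v ∈ S n, fV u v := fun n => rfl
  have hScount : ∀ n, (S n).Countable := by
    intro n
    induction n with
    | zero => exact hT.countable
    | succ n ih =>
      rw [hSsucc]
      exact ih.union (ih.biUnion fun u _ => ih.biUnion fun v _ => (hfVfin u v).countable)
  have hSmono : Monotone S := by
    apply monotone_nat_of_le_succ
    intro n
    rw [hSsucc]
    exact Set.subset_union_left
  set V' : Set V := ⋃ n, S n with hV'
  have hV'count : V'.Countable := Set.countable_iUnion hScount
  have hTV' : T ⊆ V' := Set.subset_iUnion S 0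
  have hclosed : ∀ u ∈ V', ∀ v ∈ V', fV u v ⊆ V' := by
    intro u hu v hv
    obtain ⟨m, hm⟩ := Set.mem_iUnion.mp hu
    obtain ⟨n, hn⟩ := Set.mem_iUnion.mp hv
    have hm' : u ∈ S (max m n) := hSmono (le_max_left m n) hm
    have hn' : v ∈ S (max m n) := hSmono (le_max_right m n) hn
    have : fV u v ⊆ S (max m n + 1) := by
      rw [hSsucc]
      intro x hx
      exact Or.inr (Set.mem_biUnion hm' (Set.mem_biUnion hn' hx))
    exact this.trans (Set.subset_iUnion S (max m n + 1))
  set E' : Set E := ⋃ u ∈ V', ⋃ v ∈ V', fE u v with hE'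
  have hE'count : E'.Countable :=
    hV'count.biUnion fun u _ => hV'count.biUnion fun v _ => (hfEfin u v).countable
  -- support of chosen paths lies in fV, edges in fE
  have hsupp : ∀ u v (h : u ≠ v) (i : Fin k), ∀ x ∈ (P u v h i).support, x ∈ fV u v := by
    intro u v h i x hx
    rw [hfV]
    dsimp only
    rw [dif_neg h]
    exact Set.mem_iUnion.mpr ⟨i, hx⟩
  have hedge : ∀ u v (h : u ≠ v) (i : Fin k), ∀ e ∈ (P u v h i).edges, e ∈ fE u v := by
    intro u v h i e he
    rw [hfE]
    dsimp only
    rw [dif_neg h]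
    exact Set.mem_iUnion.mpr ⟨i, he⟩
  refine ⟨V', E', hTV', hV'count, hE'count, ?_, ?_⟩
  · intro e he x hx
    obtain ⟨u, hu, v, hv, hev⟩ := by
      simpa only [hE', Set.mem_iUnion] using he
    have huv : u ≠ v := by
      intro h
      rw [hfE] at hev
      simp only [dif_pos h] at hev
      exact hev
    rw [hfE] at hev
    simp only [dif_neg huv, Set.mem_iUnion, Set.mem_setOf_eq] at hev
    obtain ⟨i, hi⟩ := hev
    exact hclosed u hu v hv (hsupp u v huv i x
      (Multigraph.Walk.mem_support_of_mem_edges _ e hi x hx))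
  · intro u v hu hv huv
    refine ⟨P u v huv, hPpath u v huv, ?_, ?_, hPdisj u v huv⟩
    · intro i x hx
      exact hclosed u hu v hv (hsupp u v huv i x hx)
    · intro i e he
      exact Set.mem_biUnion hu (Set.mem_biUnion hv (hedge u v huv i e he))
end
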